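/- arXiv:1706.01089 — 4 statements merged into one kernel-verified Lean document; each statement's English description precedes it below -/
import Mathlib

section
/- Let Λ and Λ′ be Delone sets in ℝ. Then Λ and Λ′ are bounded distance equivalent as point sets if and only if their Dirac combs ω = ∑_{x∈Λ} δ_x and ω′ = ∑_{x∈Λ′} δ_x are bounded distance equivalent as measures. -/
open MeasureTheory

/-- A set `Λ ⊆ ℝ` is Delone: uniformly discrete and relatively dense. -/
def IsDelone (Λ : Set ℝ) : Prop :=
  (∃ r > 0, ∀ x ∈ Λ, ∀ y ∈ Λ, x ≠ y → r ≤ |x - y|) ∧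
  (∃ R > 0, ∀ c : ℝ, ∃ x ∈ Λ, x ∈ Set.Icc (c - R) (c + R))

/-- Bounded distance equivalence of point sets in `ℝ`: a bijection moving every
point by a uniformly bounded amount. -/
def BddDistSets (Λ Λ' : Set ℝ) : Prop :=
  ∃ φ : ℝ → ℝ, Set.BijOn φ Λ Λ' ∧ ∃ C > 0, ∀ x ∈ Λ, |x - φ x| ≤ C

/-- The Dirac comb of a point set `Λ ⊆ ℝ`: the measure `∑_{x ∈ Λ} δ_x`. -/
noncomputable def diracComb (Λ : Set ℝ) : Measure ℝ :=
  Measure.sum (fun x : Λ => Measure.dirac (x : ℝ))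

/-- Bounded distance equivalence of measures on `ℝ`. -/
def BddDistMeasures (μ ν : Measure ℝ) : Prop :=
  ∃ C > 0, ∀ a b : ℝ, a < b →
    |(μ (Set.Icc a b)).toReal - (ν (Set.Icc a b)).toReal| < C


section Counting

variable {Λ : Set ℝ} {r : ℝ}

lemma floor_eq_abs_lt {u v : ℝ} (h : ⌊u⌋ = ⌊v⌋) : |u - v| < 1 := by
  have h1 := Int.floor_le u
  have h2 := Int.lt_floor_add_one u
  have h3 := Int.floor_le v
  have h4 := Int.lt_floor_add_one v
  rw [h] at h1 h2
  rw [abs_sub_lt_iff]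
  constructor <;> linarith

lemma sep_injOn (hr : 0 < r)
    (hsep : ∀ x ∈ Λ, ∀ y ∈ Λ, x ≠ y → r ≤ |x - y|) (a : ℝ) (s : Set ℝ) :
    Set.InjOn (fun x : ℝ => ⌊(x - a) / r⌋) (Λ ∩ s) := by
  intro x hx y hy hxy
  by_contra hne
  have h1 := hsep x hx.1 y hy.1 hne
  have h2 : |(x - a) / r - (y - a) / r| < 1 := floor_eq_abs_lt hxy
  have h3 : (x - a) / r - (y - a) / r = (x - y) / r := by ring
  rw [h3, abs_div, abs_of_pos hr, div_lt_one hr] at h2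
  linarith

lemma sep_finite (hr : 0 < r)
    (hsep : ∀ x ∈ Λ, ∀ y ∈ Λ, x ≠ y → r ≤ |x - y|) (a b : ℝ) :
    (Λ ∩ Set.Icc a b).Finite := by
  apply Set.Finite.of_finite_image _ (sep_injOn hr hsep a _)
  apply Set.Finite.subset (Set.finite_Icc (⌊(a - a) / r⌋) (⌊(b - a) / r⌋))
  rintro z ⟨x, hx, rfl⟩
  exact ⟨Int.floor_le_floor (div_le_div_of_nonneg_right (by linarith [hx.2.1]) hr.le),
    Int.floor_le_floor (div_le_div_of_nonneg_right (by linarith [hx.2.2]) hr.le)⟩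

lemma sep_ncard_le (hr : 0 < r)
    (hsep : ∀ x ∈ Λ, ∀ y ∈ Λ, x ≠ y → r ≤ |x - y|) {a b : ℝ} (hab : a ≤ b) :
    ((Λ ∩ Set.Icc a b).ncard : ℝ) ≤ (b - a) / r + 1 := by
  set f : ℝ → ℤ := fun x => ⌊(x - a) / r⌋ with hf
  have hinj := sep_injOn hr hsep a (Set.Icc a b)
  have himg : f '' (Λ ∩ Set.Icc a b) ⊆ Set.Icc (0 : ℤ) (⌊(b - a) / r⌋) := by
    rintro z ⟨x, hx, rfl⟩
    refine ⟨Int.le_floor.2 ?_, Int.floor_le_floor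
      (div_le_div_of_nonneg_right (by linarith [hx.2.2]) hr.le)⟩
    push_cast
    exact div_nonneg (by linarith [hx.2.1]) hr.le
  have hfloor0 : 0 ≤ ⌊(b - a) / r⌋ :=
    Int.le_floor.2 (by push_cast; exact div_nonneg (by linarith) hr.le)
  have h1 : (Λ ∩ Set.Icc a b).ncard ≤ (Set.Icc (0 : ℤ) (⌊(b - a) / r⌋)).ncard := by
    rw [← Set.ncard_image_of_injOn hinj]
    exact Set.ncard_le_ncard himg (Set.finite_Icc _ _)
  have h2 : (Set.Icc (0 : ℤ) (⌊(b - a) / r⌋)).ncard = (⌊(b - a) / r⌋ + 1).toNat := by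
    rw [← Finset.coe_Icc, Set.ncard_coe_finset, Int.card_Icc]
    norm_num
  have h3 : ((⌊(b - a) / r⌋ + 1).toNat : ℝ) ≤ (b - a) / r + 1 := by
    rw [← Int.cast_natCast, Int.toNat_of_nonneg (by omega)]
    push_cast
    have := Int.floor_le ((b - a) / r)
    linarith
  calc ((Λ ∩ Set.Icc a b).ncard : ℝ) ≤ ((⌊(b - a) / r⌋ + 1).toNat : ℝ) := by
        rw [← h2]; exact_mod_cast h1
    _ ≤ (b - a) / r + 1 := h3

lemma diracComb_apply_finite {s : Set ℝ} (hs : MeasurableSet s)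
    (hfin : (Λ ∩ s).Finite) :
    diracComb Λ s = ((Λ ∩ s).ncard : ENNReal) := by
  rw [diracComb, Measure.sum_apply _ hs]
  have h1 : ∀ x : Λ, Measure.dirac (x : ℝ) s = s.indicator 1 (x : ℝ) :=
    fun x => Measure.dirac_apply' _ hs
  calc (∑' x : Λ, Measure.dirac (x : ℝ) s)
      = ∑' x : Λ, s.indicator (1 : ℝ → ENNReal) (x : ℝ) := by
        exact tsum_congr h1
    _ = ∑' x : ℝ, Λ.indicator (s.indicator (1 : ℝ → ENNReal)) x := tsum_subtype Λ _
    _ = ∑' x : ℝ, (Λ ∩ s).indicator (1 : ℝ → ENNReal) x := by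
        rw [Set.indicator_indicator]
    _ = ∑' x : (Λ ∩ s : Set ℝ), (1 : ENNReal) := (tsum_subtype (Λ ∩ s) _).symm
    _ = Measure.count (Λ ∩ s) := by
        rw [Measure.count_apply hfin.measurableSet, ENNReal.tsum_set_one]
    _ = ((Λ ∩ s).ncard : ENNReal) := by
        rw [Measure.count_apply_finite _ hfin, Set.ncard_eq_toFinset_card _ hfin]

end Counting

/-- An enumeration of a Delone set by `ℤ`, with gaps between `ρ` and `ν`,
crossing `0` between indices `-1` and `0`. -/
structure Enum (Λ : Set ℝ) (ρ ν : ℝ) : Type where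
  e : ℤ → ℝ
  mem : ∀ n, e n ∈ Λ
  le_succ : ∀ n, e n + ρ ≤ e (n + 1)
  succ_le : ∀ n, e (n + 1) ≤ e n + ν
  surj : ∀ y ∈ Λ, ∃ n, e n = y
  pos0 : 0 < e 0
  nonpos : e (-1) ≤ 0

lemma exists_enum {Λ : Set ℝ} (hΛ : IsDelone Λ) :
    ∃ ρ > (0:ℝ), ∃ ν > (0:ℝ), Nonempty (Enum Λ ρ ν) := by
  obtain ⟨⟨r, hr, hsep⟩, ⟨R, hR, hdense⟩⟩ := hΛ
  have nextEx : ∀ x : ℝ, ∃ y, (y ∈ Λ ∧ x < y ∧ y ≤ x + 3 * R) ∧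
      ∀ z ∈ Λ, x < z → y ≤ z := by
    intro x
    have hne : (Λ ∩ Set.Ioc x (x + 3 * R)).Nonempty := by
      obtain ⟨p, hp, hp2⟩ := hdense (x + 2 * R)
      exact ⟨p, hp, by constructor <;> [linarith [hp2.1]; linarith [hp2.2]]⟩
    have hfin : (Λ ∩ Set.Ioc x (x + 3 * R)).Finite :=
      (sep_finite hr hsep x (x + 3 * R)).subset
        (Set.inter_subset_inter_right _ Set.Ioc_subset_Icc_self)
    obtain ⟨y, hy, hmin⟩ := Set.exists_min_image _ id hfin hne
    refine ⟨y, ⟨hy.1, hy.2.1, hy.2.2⟩, ?_⟩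
    intro z hz hxz
    by_cases hz3 : z ≤ x + 3 * R
    · exact hmin z ⟨hz, hxz, hz3⟩
    · linarith [hy.2.2]
  have prevEx : ∀ x : ℝ, ∃ y, (y ∈ Λ ∧ y < x ∧ x - 3 * R ≤ y) ∧
      ∀ z ∈ Λ, z < x → z ≤ y := by
    intro x
    have hne : (Λ ∩ Set.Ico (x - 3 * R) x).Nonempty := by
      obtain ⟨p, hp, hp2⟩ := hdense (x - 2 * R)
      exact ⟨p, hp, by constructor <;> [linarith [hp2.1]; linarith [hp2.2]]⟩
    have hfin : (Λ ∩ Set.Ico (x - 3 * R) x).Finite :=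
      (sep_finite hr hsep (x - 3 * R) x).subset
        (Set.inter_subset_inter_right _ Set.Ico_subset_Icc_self)
    obtain ⟨y, hy, hmax⟩ := Set.exists_max_image _ id hfin hne
    refine ⟨y, ⟨hy.1, hy.2.2, hy.2.1⟩, ?_⟩
    intro z hz hzx
    by_cases hz3 : x - 3 * R ≤ z
    · exact hmax z ⟨hz, hz3, hzx⟩
    · linarith [hy.2.1]
  choose nxt hnxt hnxtmin using nextEx
  choose prv hprv hprvmax using prevEx
  set f : ℕ → ℝ := fun k => nxt^[k] (nxt 0) with hfdef
  set g : ℕ → ℝ := fun k => prv^[k] (nxt 0) with hgdef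
  set e : ℤ → ℝ := fun n => if 0 ≤ n then f n.toNat else g (-n).toNat with hedef
  have he0 : e 0 = nxt 0 := by simp [hedef, hfdef]
  have hA : ∀ n : ℤ, 0 ≤ n → e (n + 1) = nxt (e n) := by
    intro n hn
    simp only [hedef, if_pos hn, if_pos (by omega : (0:ℤ) ≤ n + 1)]
    have h1 : (n + 1).toNat = n.toNat + 1 := by omega
    rw [h1, hfdef]
    simp [Function.iterate_succ_apply']
  have hB : ∀ n : ℤ, n ≤ -1 → e n = prv (e (n + 1)) := by
    intro n hn
    rcases eq_or_lt_of_le hn with h | h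
    · subst h
      norm_num
      simp only [hedef]
      norm_num [hfdef, hgdef]
    · have hn1 : ¬ (0:ℤ) ≤ n := by omega
      have hn2 : ¬ (0:ℤ) ≤ n + 1 := by omega
      simp only [hedef, if_neg hn1, if_neg hn2]
      have h1 : (-n).toNat = (-(n+1)).toNat + 1 := by omega
      rw [h1, hgdef]
      simp [Function.iterate_succ_apply']
  have hfmem : ∀ k : ℕ, f k ∈ Λ := by
    intro k
    induction k with
    | zero => simpa [hfdef] using (hnxt 0).1
    | succ k ih => simp only [hfdef, Function.iterate_succ_apply']; exact (hnxt _).1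
  have hgmem : ∀ k : ℕ, g k ∈ Λ := by
    intro k
    induction k with
    | zero => simpa [hgdef] using (hnxt 0).1
    | succ k ih => simp only [hgdef, Function.iterate_succ_apply']; exact (hprv _).1
  have emem : ∀ n : ℤ, e n ∈ Λ := by
    intro n
    simp only [hedef]
    split
    · exact hfmem _
    · exact hgmem _
  have hlt : ∀ n : ℤ, e n < e (n + 1) ∧ e (n + 1) ≤ e n + 3 * R := by
    intro n
    by_cases hn : 0 ≤ n
    · rw [hA n hn]; exact ⟨(hnxt _).2.1, (hnxt _).2.2⟩
    · rw [hB n (by omega)]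
      exact ⟨(hprv _).2.1, by linarith [(hprv (e (n + 1))).2.2]⟩
  have hsm : StrictMono e := strictMono_int_of_lt_succ fun n => (hlt n).1
  have hstep : ∀ n : ℤ, e n + r ≤ e (n + 1) := by
    intro n
    have hne : e n ≠ e (n + 1) := ne_of_lt (hlt n).1
    have := hsep _ (emem n) _ (emem (n + 1)) hne
    rw [abs_sub_comm, abs_of_pos (by linarith [(hlt n).1])] at this
    linarith
  have hpos0 : 0 < e 0 := by rw [he0]; exact (hnxt 0).2.1
  have hem1 : e (-1) = prv (e 0) := by
    have := hB (-1) (le_refl _)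
    norm_num at this
    exact this
  have hnonpos : e (-1) ≤ 0 := by
    by_contra hc
    push_neg at hc
    have h1 := hnxtmin 0 (e (-1)) (emem _) hc
    rw [he0] at hem1
    have h2 := (hprv (nxt 0)).2.1
    rw [← hem1] at h2
    rw [← he0] at h1
    have := hsm (show (-1:ℤ) < 0 by norm_num)
    linarith
  have surjpos : ∀ N : ℕ, ∀ y ∈ Λ, e 0 ≤ y → (Λ ∩ Set.Icc (e 0) y).ncard = N →
      ∃ n : ℤ, e n = y := by
    intro N
    induction N using Nat.strong_induction_on with
    | _ N ih =>
      intro y hy h0y hcard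
      rcases eq_or_lt_of_le h0y with h | h
      · exact ⟨0, h⟩
      · set z := prv y with hz
        have hzΛ : z ∈ Λ := (hprv y).1
        have hzy : z < y := (hprv y).2.1
        have hzmax : ∀ w ∈ Λ, w < y → w ≤ z := hprvmax y
        have h0z : e 0 ≤ z := hzmax _ (emem 0) h
        have hyfin : (Λ ∩ Set.Icc (e 0) y).Finite := sep_finite hr hsep _ _
        have hzfin : (Λ ∩ Set.Icc (e 0) z).Finite := sep_finite hr hsep _ _
        have hsub : insert y (Λ ∩ Set.Icc (e 0) z) ⊆ Λ ∩ Set.Icc (e 0) y := by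
          rintro w (rfl | ⟨hw1, hw2, hw3⟩)
          · exact ⟨hy, h0y, le_refl _⟩
          · exact ⟨hw1, hw2, le_trans hw3 hzy.le⟩
        have hnm : y ∉ Λ ∩ Set.Icc (e 0) z := fun hw => absurd hw.2.2 (not_le.2 hzy)
        have hcard' : (Λ ∩ Set.Icc (e 0) z).ncard < N := by
          have h1 : (insert y (Λ ∩ Set.Icc (e 0) z)).ncard ≤ N := by
            rw [← hcard]; exact Set.ncard_le_ncard hsub hyfin
          rw [Set.ncard_insert_of_notMem hnm hzfin] at h1
          omega
        obtain ⟨n, hn⟩ := ih _ hcard' z hzΛ h0z rfl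
        refine ⟨n + 1, ?_⟩
        have hn0 : 0 ≤ n := by
          by_contra hneg
          have h1 : e n < e 0 := hsm (by omega)
          rw [hn] at h1
          linarith
        rw [hA n hn0, hn]
        have h1 : nxt z ≤ y := hnxtmin z y hy hzy
        have h2 : y ≤ nxt z := by
          by_contra hc
          push_neg at hc
          have h3 := hzmax (nxt z) (hnxt z).1 hc
          linarith [(hnxt z).2.1]
        linarith
  have surjneg : ∀ N : ℕ, ∀ y ∈ Λ, y ≤ e (-1) → (Λ ∩ Set.Icc y (e (-1))).ncard = N →
      ∃ n : ℤ, e n = y := by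
    intro N
    induction N using Nat.strong_induction_on with
    | _ N ih =>
      intro y hy hy1 hcard
      rcases eq_or_lt_of_le hy1 with h | h
      · exact ⟨-1, h.symm⟩
      · set z := nxt y with hz
        have hzΛ : z ∈ Λ := (hnxt y).1
        have hyz : y < z := (hnxt y).2.1
        have hzmin : ∀ w ∈ Λ, y < w → z ≤ w := hnxtmin y
        have hz1 : z ≤ e (-1) := hzmin _ (emem (-1)) h
        have hyfin : (Λ ∩ Set.Icc y (e (-1))).Finite := sep_finite hr hsep _ _
        have hzfin : (Λ ∩ Set.Icc z (e (-1))).Finite := sep_finite hr hsep _ _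
        have hsub : insert y (Λ ∩ Set.Icc z (e (-1))) ⊆ Λ ∩ Set.Icc y (e (-1)) := by
          rintro w (rfl | ⟨hw1, hw2, hw3⟩)
          · exact ⟨hy, le_refl _, hy1⟩
          · exact ⟨hw1, le_trans hyz.le hw2, hw3⟩
        have hnm : y ∉ Λ ∩ Set.Icc z (e (-1)) := fun hw => absurd hw.2.1 (not_le.2 hyz)
        have hcard' : (Λ ∩ Set.Icc z (e (-1))).ncard < N := by
          have h1 : (insert y (Λ ∩ Set.Icc z (e (-1)))).ncard ≤ N := by
            rw [← hcard]; exact Set.ncard_le_ncard hsub hyfin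
          rw [Set.ncard_insert_of_notMem hnm hzfin] at h1
          omega
        obtain ⟨n, hn⟩ := ih _ hcard' z hzΛ hz1 rfl
        refine ⟨n - 1, ?_⟩
        have hn1 : n ≤ -1 := by
          by_contra hneg
          have h1 : e (-1) < e n := hsm (by omega)
          rw [hn] at h1
          linarith
        have hB' : e (n - 1) = prv (e n) := by
          have := hB (n - 1) (by omega)
          rw [show n - 1 + 1 = n by ring] at this
          exact this
        rw [hB', hn]
        have h1 : y ≤ prv z := hprvmax z y hy hyz
        have h2 : prv z ≤ y := by
          by_contra hc
          push_neg at hc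
          have h3 := hzmin (prv z) (hprv z).1 hc
          linarith [(hprv z).2.1]
        linarith
  have hsurj : ∀ y ∈ Λ, ∃ n, e n = y := by
    intro y hy
    by_cases h : 0 < y
    · exact surjpos _ y hy (by rw [he0]; exact hnxtmin 0 y hy h) rfl
    · push_neg at h
      refine surjneg _ y hy ?_ rfl
      rw [hem1]
      exact hprvmax (e 0) y hy (by linarith)
  exact ⟨r, hr, 3 * R, by linarith,
    ⟨⟨e, emem, hstep, fun n => (hlt n).2, hsurj, hpos0, hnonpos⟩⟩⟩

namespace Enum

variable {Λ : Set ℝ} {ρ ν : ℝ} (E : Enum Λ ρ ν)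

lemma sm (hρ : 0 < ρ) : StrictMono E.e :=
  strictMono_int_of_lt_succ fun n => by linarith [E.le_succ n]

lemma gap_upper_nat (hν : 0 ≤ ν) (m : ℤ) : ∀ k : ℕ, E.e (m + k) ≤ E.e m + (k : ℝ) * ν := by
  intro k
  induction k with
  | zero => simp
  | succ k ih =>
    have h := E.succ_le (m + k)
    push_cast
    rw [show m + ((k:ℤ) + 1) = m + k + 1 by ring]
    push_cast at ih
    linarith

lemma gap_lower_nat (m : ℤ) : ∀ k : ℕ, E.e m + (k : ℝ) * ρ ≤ E.e (m + k) := by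
  intro k
  induction k with
  | zero => simp
  | succ k ih =>
    have h := E.le_succ (m + k)
    push_cast
    rw [show m + ((k:ℤ) + 1) = m + k + 1 by ring]
    push_cast at ih
    linarith

lemma cast_toNat_sub {m n : ℤ} (hmn : m ≤ n) : (((n - m).toNat) : ℝ) = (n : ℝ) - m := by
  have h := Int.toNat_of_nonneg (by omega : (0:ℤ) ≤ n - m)
  exact_mod_cast h

lemma gap_upper (hν : 0 ≤ ν) (m n : ℤ) (hmn : m ≤ n) :
    E.e n ≤ E.e m + ((n : ℝ) - m) * ν := by
  have h := E.gap_upper_nat hν m (n - m).toNat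
  rw [show m + ((n - m).toNat : ℤ) = n by omega, cast_toNat_sub hmn] at h
  exact h

lemma gap_lower (m n : ℤ) (hmn : m ≤ n) :
    E.e m + ((n : ℝ) - m) * ρ ≤ E.e n := by
  have h := E.gap_lower_nat m (n - m).toNat
  rw [show m + ((n - m).toNat : ℤ) = n by omega, cast_toNat_sub hmn] at h
  exact h

lemma dist_le (hρ : 0 < ρ) (hν : 0 ≤ ν) (m n : ℤ) :
    |E.e n - E.e m| ≤ |(n : ℝ) - (m : ℝ)| * ν := by
  rcases le_total m n with h | h
  · have h1 := E.gap_upper hν m n h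
    have h2 := E.gap_lower m n h  -- gives e n ≥ e m
    have h3 : (0:ℝ) ≤ (n:ℝ) - m := by exact_mod_cast sub_nonneg.2 (by exact_mod_cast h)
    rw [abs_of_nonneg (by nlinarith [mul_nonneg h3 hρ.le]), abs_of_nonneg h3]
    linarith
  · have h1 := E.gap_upper hν n m h
    have h2 := E.gap_lower n m h
    have h3 : (0:ℝ) ≤ (m:ℝ) - n := by exact_mod_cast sub_nonneg.2 (by exact_mod_cast h)
    rw [abs_sub_comm, abs_sub_comm ((n:ℝ)) m,
      abs_of_nonneg (by nlinarith [mul_nonneg h3 hρ.le]), abs_of_nonneg h3]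
    linarith

lemma neg_iff (hρ : 0 < ρ) {m : ℤ} : E.e m ≤ 0 ↔ m ≤ -1 := by
  constructor
  · intro h
    by_contra hc
    have : E.e 0 ≤ E.e m := (E.sm hρ).monotone (by omega)
    linarith [E.pos0]
  · intro h
    calc E.e m ≤ E.e (-1) := (E.sm hρ).monotone h
      _ ≤ 0 := E.nonpos

lemma exists_idx (hρ : 0 < ρ) (t : ℝ) :
    ∃ q : ℤ, (E.e q ≤ t ∧ t < E.e (q + 1)) ∧ ∀ m : ℤ, E.e m ≤ t → m ≤ q := by
  have hbdd : ∃ b : ℤ, ∀ z : ℤ, E.e z ≤ t → z ≤ b := by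
    refine ⟨max 0 ⌈(t - E.e 0) / ρ⌉, ?_⟩
    intro z hz
    rcases le_or_gt z 0 with h | h
    · exact le_trans h (le_max_left _ _)
    · have h1 := E.gap_lower 0 z h.le
      push_cast at h1
      have h3 : (z : ℝ) ≤ (t - E.e 0) / ρ := by
        rw [le_div_iff₀ hρ]; linarith
      have h4 : z ≤ ⌈(t - E.e 0) / ρ⌉ := by
        exact_mod_cast le_trans h3 (Int.le_ceil _)
      exact le_trans h4 (le_max_right _ _)
  have hex : ∃ z : ℤ, E.e z ≤ t := by
    set b : ℤ := max 0 ⌈(E.e 0 - t) / ρ⌉ with hb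
    refine ⟨-b, ?_⟩
    have hb0 : (0:ℤ) ≤ b := le_max_left _ _
    have h1 := E.gap_lower (-b) 0 (by omega)
    have h2 : (E.e 0 - t) / ρ ≤ (b : ℝ) :=
      le_trans (Int.le_ceil _) (by exact_mod_cast le_max_right _ _)
    rw [div_le_iff₀ hρ] at h2
    push_cast at h1
    linarith
  obtain ⟨q, hq1, hq2⟩ := Int.exists_greatest_of_bdd hbdd hex
  exact ⟨q, ⟨hq1, by by_contra hc; push_neg at hc; have := hq2 _ hc; omega⟩, hq2⟩

lemma image_Ioc_pos (hρ : 0 < ρ) {t : ℝ} {q : ℤ}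
    (hq1 : E.e q ≤ t) (hq2 : ∀ m, E.e m ≤ t → m ≤ q) :
    Λ ∩ Set.Ioc 0 t = E.e '' Set.Icc 0 q := by
  ext y
  constructor
  · rintro ⟨hyΛ, hy0, hyt⟩
    obtain ⟨m, rfl⟩ := E.surj y hyΛ
    refine ⟨m, ⟨?_, hq2 m hyt⟩, rfl⟩
    by_contra hc
    have h := (E.neg_iff hρ).2 (by omega : m ≤ -1)
    linarith
  · rintro ⟨m, ⟨hm0, hmq⟩, rfl⟩
    refine ⟨E.mem m, ?_, le_trans ((E.sm hρ).monotone hmq) hq1⟩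
    calc (0:ℝ) < E.e 0 := E.pos0
      _ ≤ E.e m := (E.sm hρ).monotone hm0

lemma image_Ioc_neg (hρ : 0 < ρ) {t : ℝ} {q : ℤ}
    (hq1 : E.e q ≤ t) (hq1' : t < E.e (q + 1)) :
    Λ ∩ Set.Ioc t 0 = E.e '' Set.Icc (q + 1) (-1) := by
  ext y
  constructor
  · rintro ⟨hyΛ, hyt, hy0⟩
    obtain ⟨m, rfl⟩ := E.surj y hyΛ
    refine ⟨m, ⟨?_, (E.neg_iff hρ).1 hy0⟩, rfl⟩
    by_contra hc
    have h : E.e m ≤ E.e q := (E.sm hρ).monotone (by omega)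
    linarith
  · rintro ⟨m, ⟨hm1, hm2⟩, rfl⟩
    refine ⟨E.mem m, lt_of_lt_of_le hq1' ((E.sm hρ).monotone hm1),
      (E.neg_iff hρ).2 hm2⟩

lemma ncard_Icc_int (a b : ℤ) : ((Set.Icc a b).ncard : ℤ) = max (b + 1 - a) 0 := by
  rw [← Finset.coe_Icc, Set.ncard_coe_finset, Int.card_Icc]
  omega

lemma ncard_Ioc_pos (hρ : 0 < ρ) {t : ℝ} {q : ℤ}
    (hq1 : E.e q ≤ t) (hq2 : ∀ m, E.e m ≤ t → m ≤ q) (hq0 : -1 ≤ q) :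
    ((Λ ∩ Set.Ioc 0 t).ncard : ℝ) = (q : ℝ) + 1 := by
  rw [E.image_Ioc_pos hρ hq1 hq2,
    Set.ncard_image_of_injOn ((E.sm hρ).injective.injOn)]
  have h := ncard_Icc_int 0 q
  have h2 : ((Set.Icc (0:ℤ) q).ncard : ℤ) = q + 1 := by omega
  exact_mod_cast h2

lemma ncard_Ioc_neg (hρ : 0 < ρ) {t : ℝ} {q : ℤ}
    (hq1 : E.e q ≤ t) (hq1' : t < E.e (q + 1)) (hq0 : q ≤ -1) :
    ((Λ ∩ Set.Ioc t 0).ncard : ℝ) = -(q : ℝ) - 1 := by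
  rw [E.image_Ioc_neg hρ hq1 hq1',
    Set.ncard_image_of_injOn ((E.sm hρ).injective.injOn)]
  have h := ncard_Icc_int (q + 1) (-1)
  have h2 : ((Set.Icc (q+1) (-1:ℤ)).ncard : ℤ) = -q - 1 := by omega
  exact_mod_cast h2

end Enum

lemma ncard_Icc_Ioc {Λ₀ : Set ℝ} {a b : ℝ}
    (hfin : (Λ₀ ∩ Set.Icc a b).Finite) :
    (Λ₀ ∩ Set.Ioc a b).ncard ≤ (Λ₀ ∩ Set.Icc a b).ncard ∧
    (Λ₀ ∩ Set.Icc a b).ncard ≤ (Λ₀ ∩ Set.Ioc a b).ncard + 1 := by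
  have hsub : Λ₀ ∩ Set.Ioc a b ⊆ Λ₀ ∩ Set.Icc a b :=
    Set.inter_subset_inter_right _ Set.Ioc_subset_Icc_self
  constructor
  · exact Set.ncard_le_ncard hsub hfin
  · have h2 : Λ₀ ∩ Set.Icc a b ⊆ insert a (Λ₀ ∩ Set.Ioc a b) := by
      rintro x ⟨hx1, hx2, hx3⟩
      rcases eq_or_lt_of_le hx2 with h | h
      · exact Or.inl h.symm
      · exact Or.inr ⟨hx1, h, hx3⟩
    calc (Λ₀ ∩ Set.Icc a b).ncard ≤ (insert a (Λ₀ ∩ Set.Ioc a b)).ncard :=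
          Set.ncard_le_ncard h2 ((hfin.subset hsub).insert a)
      _ ≤ _ := Set.ncard_insert_le _ _


/-- Two Delone sets in `ℝ` are bounded distance equivalent as point sets if and only
if their Dirac combs are bounded distance equivalent as measures. -/
theorem delone_bddDist_iff_diracComb_bddDist (Λ Λ' : Set ℝ)
    (hΛ : IsDelone Λ) (hΛ' : IsDelone Λ') :
    BddDistSets Λ Λ' ↔ BddDistMeasures (diracComb Λ) (diracComb Λ') := by
  obtain ⟨r, hr, hsep⟩ := hΛ.1
  obtain ⟨r', hr', hsep'⟩ := hΛ'.1
  constructor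
  · rintro ⟨φ, hbij, C, hC, hmove⟩
    refine ⟨2 * (C / r + 1) + 2 * (C / r' + 1) + 1, by positivity, ?_⟩
    intro a b hab
    have hfin1 : (Λ ∩ Set.Icc a b).Finite := sep_finite hr hsep a b
    have hfin1' : (Λ' ∩ Set.Icc a b).Finite := sep_finite hr' hsep' a b
    rw [diracComb_apply_finite measurableSet_Icc hfin1,
      diracComb_apply_finite measurableSet_Icc hfin1',
      ENNReal.toReal_natCast, ENNReal.toReal_natCast]
    have hsplit : ∀ (Λ₀ : Set ℝ), Λ₀ ∩ Set.Icc (a - C) (b + C) ⊆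
        (Λ₀ ∩ Set.Icc (a - C) a) ∪ (Λ₀ ∩ Set.Icc a b) ∪ (Λ₀ ∩ Set.Icc b (b + C)) := by
      rintro Λ₀ x ⟨hx1, hx2, hx3⟩
      rcases le_or_gt x a with h | h
      · exact Or.inl (Or.inl ⟨hx1, hx2, h⟩)
      · rcases le_or_gt x b with h2 | h2
        · exact Or.inl (Or.inr ⟨hx1, h.le, h2⟩)
        · exact Or.inr ⟨hx1, h2.le, hx3⟩
    have hcount : ∀ (Λ₀ : Set ℝ) (r₀ : ℝ), 0 < r₀ →
        (∀ x ∈ Λ₀, ∀ y ∈ Λ₀, x ≠ y → r₀ ≤ |x - y|) →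
        ((Λ₀ ∩ Set.Icc (a - C) (b + C)).ncard : ℝ) ≤
          ((Λ₀ ∩ Set.Icc a b).ncard : ℝ) + 2 * (C / r₀ + 1) := by
      intro Λ₀ r₀ hr₀ hsep₀
      have h1 : (Λ₀ ∩ Set.Icc (a - C) (b + C)).ncard ≤
          (Λ₀ ∩ Set.Icc (a - C) a).ncard + (Λ₀ ∩ Set.Icc a b).ncard
            + (Λ₀ ∩ Set.Icc b (b + C)).ncard := by
        calc (Λ₀ ∩ Set.Icc (a - C) (b + C)).ncard
            ≤ ((Λ₀ ∩ Set.Icc (a - C) a) ∪ (Λ₀ ∩ Set.Icc a b)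
                ∪ (Λ₀ ∩ Set.Icc b (b + C))).ncard := by
              refine Set.ncard_le_ncard (hsplit Λ₀) ?_
              exact (((sep_finite hr₀ hsep₀ _ _).union (sep_finite hr₀ hsep₀ _ _)).union
                (sep_finite hr₀ hsep₀ _ _))
          _ ≤ _ := le_trans (Set.ncard_union_le _ _)
              (by linarith [Set.ncard_union_le (Λ₀ ∩ Set.Icc (a - C) a) (Λ₀ ∩ Set.Icc a b)])
      have h2 : ((Λ₀ ∩ Set.Icc (a - C) a).ncard : ℝ) ≤ C / r₀ + 1 := by
        have := sep_ncard_le hr₀ hsep₀ (show a - C ≤ a by linarith)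
        simpa using this
      have h3 : ((Λ₀ ∩ Set.Icc b (b + C)).ncard : ℝ) ≤ C / r₀ + 1 := by
        have := sep_ncard_le hr₀ hsep₀ (show b ≤ b + C by linarith)
        simpa using this
      have h1' : ((Λ₀ ∩ Set.Icc (a - C) (b + C)).ncard : ℝ) ≤
          ((Λ₀ ∩ Set.Icc (a - C) a).ncard : ℝ) + ((Λ₀ ∩ Set.Icc a b).ncard : ℝ)
            + ((Λ₀ ∩ Set.Icc b (b + C)).ncard : ℝ) := by exact_mod_cast h1
      linarith
    -- Λ count ≤ Λ' window count
    have hforward : ((Λ ∩ Set.Icc a b).ncard : ℝ) ≤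
        ((Λ' ∩ Set.Icc (a - C) (b + C)).ncard : ℝ) := by
      have himg : φ '' (Λ ∩ Set.Icc a b) ⊆ Λ' ∩ Set.Icc (a - C) (b + C) := by
        rintro y ⟨x, ⟨hxΛ, hx1, hx2⟩, rfl⟩
        have hm := abs_le.1 (hmove x hxΛ)
        exact ⟨hbij.mapsTo hxΛ, by linarith [hm.2], by linarith [hm.1]⟩
      have h1 : (Λ ∩ Set.Icc a b).ncard = (φ '' (Λ ∩ Set.Icc a b)).ncard :=
        (Set.ncard_image_of_injOn (hbij.injOn.mono Set.inter_subset_left)).symm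
      have h2 : (φ '' (Λ ∩ Set.Icc a b)).ncard ≤ (Λ' ∩ Set.Icc (a - C) (b + C)).ncard :=
        Set.ncard_le_ncard himg (sep_finite hr' hsep' _ _)
      exact_mod_cast h1 ▸ h2
    have hbackward : ((Λ' ∩ Set.Icc a b).ncard : ℝ) ≤
        ((Λ ∩ Set.Icc (a - C) (b + C)).ncard : ℝ) := by
      have himg : Λ' ∩ Set.Icc a b ⊆ φ '' (Λ ∩ Set.Icc (a - C) (b + C)) := by
        rintro y ⟨hyΛ', hy1, hy2⟩
        obtain ⟨x, hxΛ, rfl⟩ := hbij.surjOn hyΛ'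
        have hm := abs_le.1 (hmove x hxΛ)
        exact ⟨x, ⟨hxΛ, by linarith [hm.1], by linarith [hm.2]⟩, rfl⟩
      have h1 : (φ '' (Λ ∩ Set.Icc (a - C) (b + C))).ncard
          = (Λ ∩ Set.Icc (a - C) (b + C)).ncard :=
        Set.ncard_image_of_injOn (hbij.injOn.mono Set.inter_subset_left)
      have h2 : (Λ' ∩ Set.Icc a b).ncard ≤ (φ '' (Λ ∩ Set.Icc (a - C) (b + C))).ncard :=
        Set.ncard_le_ncard himg ((sep_finite hr hsep _ _).image φ)
      exact_mod_cast h1 ▸ h2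
    have hc1 := hcount Λ' r' hr' hsep'
    have hc2 := hcount Λ r hr hsep
    have hcr : (0:ℝ) ≤ C / r := by positivity
    have hcr' : (0:ℝ) ≤ C / r' := by positivity
    rw [abs_sub_lt_iff]
    constructor <;> linarith
  · rintro ⟨C, hC, hmeas⟩
    obtain ⟨ρ, hρ, ν, hν, ⟨E⟩⟩ := exists_enum hΛ
    obtain ⟨ρ', hρ', ν', hν', ⟨E'⟩⟩ := exists_enum hΛ'
    have H : ∀ a b : ℝ, a < b →
        |((Λ ∩ Set.Icc a b).ncard : ℝ) - ((Λ' ∩ Set.Icc a b).ncard : ℝ)| < C := by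
      intro a b hab
      have := hmeas a b hab
      rwa [diracComb_apply_finite measurableSet_Icc (sep_finite hr hsep a b),
        diracComb_apply_finite measurableSet_Icc (sep_finite hr' hsep' a b),
        ENNReal.toReal_natCast, ENNReal.toReal_natCast] at this
    choose q hq hqmax using fun t => E.exists_idx hρ t
    choose q' hq' hqmax' using fun t => E'.exists_idx hρ' t
    have Hidx : ∀ t : ℝ, |(q t : ℝ) - (q' t : ℝ)| < C + 2 := by
      intro t
      rcases lt_trichotomy 0 t with h | h | h
      · have hq0 : -1 ≤ q t := hqmax t (-1) (le_trans E.nonpos h.le)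
        have hq0' : -1 ≤ q' t := hqmax' t (-1) (le_trans E'.nonpos h.le)
        have hA := E.ncard_Ioc_pos hρ (hq t).1 (hqmax t) hq0
        have hA' := E'.ncard_Ioc_pos hρ' (hq' t).1 (hqmax' t) hq0'
        have hB := ncard_Icc_Ioc (sep_finite hr hsep 0 t)
        have hB' := ncard_Icc_Ioc (sep_finite hr' hsep' 0 t)
        have hB1 : ((Λ ∩ Set.Ioc 0 t).ncard : ℝ) ≤ ((Λ ∩ Set.Icc 0 t).ncard : ℝ) := by
          exact_mod_cast hB.1
        have hB2 : ((Λ ∩ Set.Icc 0 t).ncard : ℝ) ≤ ((Λ ∩ Set.Ioc 0 t).ncard : ℝ) + 1 := by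
          exact_mod_cast hB.2
        have hB1' : ((Λ' ∩ Set.Ioc 0 t).ncard : ℝ) ≤ ((Λ' ∩ Set.Icc 0 t).ncard : ℝ) := by
          exact_mod_cast hB'.1
        have hB2' : ((Λ' ∩ Set.Icc 0 t).ncard : ℝ) ≤ ((Λ' ∩ Set.Ioc 0 t).ncard : ℝ) + 1 := by
          exact_mod_cast hB'.2
        have hH := abs_sub_lt_iff.1 (H 0 t h)
        rw [abs_sub_lt_iff]
        constructor <;> linarith
      · have hq0 : q t = -1 := by
          have h1 : -1 ≤ q t := hqmax t (-1) (by rw [← h]; exact E.nonpos)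
          have h2 : q t ≤ -1 := (E.neg_iff hρ).1 (by rw [h]; exact (hq t).1)
          omega
        have hq0' : q' t = -1 := by
          have h1 : -1 ≤ q' t := hqmax' t (-1) (by rw [← h]; exact E'.nonpos)
          have h2 : q' t ≤ -1 := (E'.neg_iff hρ').1 (by rw [h]; exact (hq' t).1)
          omega
        rw [hq0, hq0']
        simp
        linarith
      · have hq0 : q t ≤ -1 := (E.neg_iff hρ).1 (le_trans (hq t).1 h.le)
        have hq0' : q' t ≤ -1 := (E'.neg_iff hρ').1 (le_trans (hq' t).1 h.le)
        have hA := E.ncard_Ioc_neg hρ (hq t).1 (hq t).2 hq0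
        have hA' := E'.ncard_Ioc_neg hρ' (hq' t).1 (hq' t).2 hq0'
        have hB := ncard_Icc_Ioc (sep_finite hr hsep t 0)
        have hB' := ncard_Icc_Ioc (sep_finite hr' hsep' t 0)
        have hB1 : ((Λ ∩ Set.Ioc t 0).ncard : ℝ) ≤ ((Λ ∩ Set.Icc t 0).ncard : ℝ) := by
          exact_mod_cast hB.1
        have hB2 : ((Λ ∩ Set.Icc t 0).ncard : ℝ) ≤ ((Λ ∩ Set.Ioc t 0).ncard : ℝ) + 1 := by
          exact_mod_cast hB.2
        have hB1' : ((Λ' ∩ Set.Ioc t 0).ncard : ℝ) ≤ ((Λ' ∩ Set.Icc t 0).ncard : ℝ) := by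
          exact_mod_cast hB'.1
        have hB2' : ((Λ' ∩ Set.Icc t 0).ncard : ℝ) ≤ ((Λ' ∩ Set.Ioc t 0).ncard : ℝ) + 1 := by
          exact_mod_cast hB'.2
        have hH := abs_sub_lt_iff.1 (H t 0 h)
        rw [abs_sub_lt_iff]
        constructor <;> linarith
    have hqe : ∀ n : ℤ, q (E.e n) = n := by
      intro n
      have h1 : n ≤ q (E.e n) := hqmax (E.e n) n (le_refl _)
      have h2 : q (E.e n) ≤ n := ((E.sm hρ).le_iff_le).1 (hq (E.e n)).1
      omega
    have hbound : ∀ n : ℤ, |E.e n - E'.e (q' (E.e n))| < ν' ∧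
        |E.e n - E'.e n| ≤ (C + 3) * ν' := by
      intro n
      set m := q' (E.e n) with hm
      have ha : E'.e m ≤ E.e n := (hq' (E.e n)).1
      have hb : E.e n < E'.e (m + 1) := (hq' (E.e n)).2
      have hc' : E'.e (m + 1) ≤ E'.e m + ν' := E'.succ_le m
      have h2 : |E.e n - E'.e m| < ν' := by
        rw [abs_of_nonneg (by linarith)]
        linarith
      refine ⟨h2, ?_⟩
      have h1 : |(n:ℝ) - (m:ℝ)| < C + 2 := by
        have := Hidx (E.e n)
        rwa [hqe n] at this
      have h3 : |E'.e m - E'.e n| ≤ |(m : ℝ) - (n : ℝ)| * ν' := E'.dist_le hρ' hν'.le n m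
      have h4 : |(m:ℝ) - (n:ℝ)| * ν' ≤ (C + 2) * ν' := by
        rw [abs_sub_comm] at h1
        exact mul_le_mul_of_nonneg_right h1.le hν'.le
      calc |E.e n - E'.e n| ≤ |E.e n - E'.e m| + |E'.e m - E'.e n| := abs_sub_le _ _ _
        _ ≤ ν' + (C + 2) * ν' := by linarith
        _ = (C + 3) * ν' := by ring
    refine ⟨fun x => E'.e (q x), ⟨?_, ?_, ?_⟩, (C + 3) * ν',
      mul_pos (by linarith) hν', ?_⟩
    · intro x _
      exact E'.mem _
    · intro x hx y hy hxy
      obtain ⟨n, rfl⟩ := E.surj x hx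
      obtain ⟨k, rfl⟩ := E.surj y hy
      simp only [hqe] at hxy
      rw [(E'.sm hρ').injective hxy]
    · intro y hy
      obtain ⟨n, rfl⟩ := E'.surj y hy
      exact ⟨E.e n, E.mem n, by simp only [hqe]⟩
    · intro x hx
      obtain ⟨n, rfl⟩ := E.surj x hx
      simp only [hqe]
      exact (hbound n).2
end

section
/- Let α > 0 be irrational with continued fraction expansion α = [a₀; a₁, a₂, …] whose partial quotients are uniformly bounded, i.e. there is c > 0 with a_i ≤ c for all i ≥ 1. Then α satisfies condition (*): there is a constant C > 0 such that ∑_{ℓ=0}^m a_{ℓ+1} q_ℓ^{−1/2} ∑_{k=1}^{ℓ+1} a_k < C for all m ∈ ℕ, where q₀ = 1, q₁ = a₁, q_{ℓ+1} = a_{ℓ+1} q_ℓ + q_{ℓ−1} are the convergent denominators of α. -/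
/-- The Gauss map `x ↦ 1/{x}`. -/
noncomputable def gaussMap (x : ℝ) : ℝ := (Int.fract x)⁻¹

/-- The partial quotients `a_n` of the continued fraction expansion of `α`. -/
noncomputable def cfA (α : ℝ) (n : ℕ) : ℤ := ⌊gaussMap^[n] α⌋

/-- The convergent denominators `q_n` of the continued fraction expansion of `α`:
`q₀ = 1`, `q₁ = a₁`, `q_{n+2} = a_{n+2} q_{n+1} + q_n`. -/
noncomputable def cfQ (α : ℝ) : ℕ → ℝ
  | 0 => 1
  | 1 => (cfA α 1 : ℝ)
  | (n + 2) => (cfA α (n + 2) : ℝ) * cfQ α (n + 1) + cfQ α n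

lemma sqrt_pow_aux (x : ℝ) (h : 0 ≤ x) (n : ℕ) :
    Real.sqrt (x ^ n) = Real.sqrt x ^ n := by
  induction n with
  | zero => simp
  | succ n ih => rw [pow_succ, Real.sqrt_mul (by positivity), ih, pow_succ]

lemma gaussIter_irrational (α : ℝ) (hα : Irrational α) (n : ℕ) :
    Irrational (gaussMap^[n] α) := by
  induction n with
  | zero => simpa using hα
  | succ n ih =>
    rw [Function.iterate_succ_apply']
    unfold gaussMap
    apply Irrational.inv
    unfold Int.fract
    exact ih.sub_intCast _

lemma gaussIter_one_lt (α : ℝ) (hα : Irrational α) (n : ℕ) :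
    1 < gaussMap^[n + 1] α := by
  rw [Function.iterate_succ_apply']
  unfold gaussMap
  have hirr := gaussIter_irrational α hα n
  have h0 : 0 < Int.fract (gaussMap^[n] α) := by
    rw [Int.fract_pos]
    exact fun hh => (hirr.ne_int _) hh
  have h1 : Int.fract (gaussMap^[n] α) < 1 := Int.fract_lt_one _
  exact (one_lt_inv₀ h0).mpr h1

lemma cfA_one_le (α : ℝ) (hα : Irrational α) (n : ℕ) (hn : 1 ≤ n) :
    (1 : ℝ) ≤ (cfA α n : ℝ) := by
  obtain ⟨m, rfl⟩ := Nat.exists_eq_add_of_le hn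
  have := gaussIter_one_lt α hα m
  unfold cfA
  have : (1 : ℤ) ≤ ⌊gaussMap^[1 + m] α⌋ := by
    rw [Int.le_floor]
    simpa [add_comm] using this.le
  exact_mod_cast this

lemma cfQ_one_le (α : ℝ) (hα : Irrational α) (n : ℕ) : (1 : ℝ) ≤ cfQ α n := by
  induction n using Nat.strong_induction_on with
  | _ n ih =>
    match n with
    | 0 => simp [cfQ]
    | 1 => simpa [cfQ] using cfA_one_le α hα 1 le_rfl
    | (m + 2) =>
      have h1 : (1 : ℝ) ≤ cfQ α (m + 1) := ih (m + 1) (by omega)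
      have h0 : (1 : ℝ) ≤ cfQ α m := ih m (by omega)
      have ha : (1 : ℝ) ≤ (cfA α (m + 2) : ℝ) := cfA_one_le α hα (m + 2) (by omega)
      show (1 : ℝ) ≤ (cfA α (m + 2) : ℝ) * cfQ α (m + 1) + cfQ α m
      nlinarith

lemma cfQ_mono (α : ℝ) (hα : Irrational α) (n : ℕ) : cfQ α n ≤ cfQ α (n + 1) := by
  match n with
  | 0 => simpa [cfQ] using cfA_one_le α hα 1 le_rfl
  | (m + 1) =>
    have h1 := cfQ_one_le α hα (m + 1)
    have h0 := cfQ_one_le α hα m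
    have ha := cfA_one_le α hα (m + 2) (by omega)
    show cfQ α (m + 1) ≤ (cfA α (m + 2) : ℝ) * cfQ α (m + 1) + cfQ α m
    nlinarith

lemma cfQ_growth (α : ℝ) (hα : Irrational α) (n : ℕ) :
    Real.sqrt 2 ^ n ≤ Real.sqrt 2 * cfQ α n := by
  have hs : (1 : ℝ) < Real.sqrt 2 := by
    rw [show (1 : ℝ) = Real.sqrt 1 by simp]
    exact Real.sqrt_lt_sqrt (by norm_num) (by norm_num)
  have hs2 : Real.sqrt 2 * Real.sqrt 2 = 2 :=
    Real.mul_self_sqrt (by norm_num)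
  induction n using Nat.strong_induction_on with
  | _ n ih =>
    match n with
    | 0 => simpa [cfQ] using hs.le
    | 1 =>
      have := cfA_one_le α hα 1 le_rfl
      show Real.sqrt 2 ^ 1 ≤ Real.sqrt 2 * cfQ α 1
      rw [pow_one]
      have : (1 : ℝ) ≤ cfQ α 1 := cfQ_one_le α hα 1
      nlinarith
    | (m + 2) =>
      have ihm : Real.sqrt 2 ^ m ≤ Real.sqrt 2 * cfQ α m := ih m (by omega)
      have hmono := cfQ_mono α hα m
      have ha := cfA_one_le α hα (m + 2) (by omega)
      have h1 := cfQ_one_le α hα (m + 1)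
      show Real.sqrt 2 ^ (m + 2) ≤ Real.sqrt 2 * ((cfA α (m + 2) : ℝ) * cfQ α (m + 1) + cfQ α m)
      have key : Real.sqrt 2 ^ (m + 2) = Real.sqrt 2 ^ m * 2 := by
        rw [pow_succ, pow_succ, mul_assoc, hs2]
      rw [key]
      have hsq : (0 : ℝ) < Real.sqrt 2 := by positivity
      have h5 : Real.sqrt 2 * cfQ α m ≤ Real.sqrt 2 * cfQ α (m + 1) :=
        mul_le_mul_of_nonneg_left hmono hsq.le
      have h6 : 0 ≤ Real.sqrt 2 * (((cfA α (m + 2) : ℝ) - 1) * cfQ α (m + 1)) :=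
        mul_nonneg hsq.le (mul_nonneg (by linarith) (by linarith))
      nlinarith

/-- If the partial quotients of the continued fraction expansion of the irrational
number `α > 0` are uniformly bounded, then `α` satisfies condition (*):
`∑_{ℓ=0}^m a_{ℓ+1} q_ℓ^{-1/2} ∑_{k=1}^{ℓ+1} a_k` is bounded uniformly in `m`. -/
theorem condStar_of_bounded_partial_quotients
    (α : ℝ) (hα : Irrational α) (hαpos : 0 < α)
    (c : ℝ) (hc : 0 < c) (hbd : ∀ i : ℕ, 1 ≤ i → (cfA α i : ℝ) ≤ c) :
    ∃ C > 0, ∀ m : ℕ,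
      ∑ ℓ ∈ Finset.range (m + 1),
        ((cfA α (ℓ + 1) : ℝ) / Real.sqrt (cfQ α ℓ)) *
          ∑ k ∈ Finset.Icc 1 (ℓ + 1), (cfA α k : ℝ) < C := by
  set s : ℝ := Real.sqrt 2 with hsdef
  have hs : (1 : ℝ) < s := by
    rw [hsdef, show (1 : ℝ) = Real.sqrt 1 by simp]
    exact Real.sqrt_lt_sqrt (by norm_num) (by norm_num)
  have hs0 : (0 : ℝ) < s := lt_trans one_pos hs
  set v : ℝ := Real.sqrt s with hvdef
  have hv : (1 : ℝ) < v := by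
    rw [hvdef, show (1 : ℝ) = Real.sqrt 1 by simp]
    exact Real.sqrt_lt_sqrt (by norm_num) hs
  have hv0 : (0 : ℝ) < v := lt_trans one_pos hv
  set t : ℝ := v⁻¹ with htdef
  have ht0 : (0 : ℝ) < t := by positivity
  have ht1 : t < 1 := by rw [htdef]; exact inv_lt_one_of_one_lt₀ hv
  -- bound on 1/sqrt(q_ℓ)
  have hqpos : ∀ ℓ, (0 : ℝ) < cfQ α ℓ := fun ℓ => lt_of_lt_of_le one_pos (cfQ_one_le α hα ℓ)
  have hsqrt_bound : ∀ ℓ : ℕ, (Real.sqrt (cfQ α ℓ))⁻¹ ≤ v * t ^ ℓ := by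
    intro ℓ
    have hg := cfQ_growth α hα ℓ
    -- s^ℓ / s ≤ q_ℓ
    have h1 : s ^ ℓ / s ≤ cfQ α ℓ := by
      rw [div_le_iff₀ hs0]; linarith [mul_comm (cfQ α ℓ) s ▸ hg]
    have h2 : Real.sqrt (s ^ ℓ / s) ≤ Real.sqrt (cfQ α ℓ) := Real.sqrt_le_sqrt h1
    have h3 : Real.sqrt (s ^ ℓ / s) = v ^ ℓ / v := by
      rw [Real.sqrt_div (pow_nonneg hs0.le ℓ), sqrt_pow_aux s hs0.le]
    rw [h3] at h2
    have hvl : (0 : ℝ) < v ^ ℓ / v := by positivity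
    have h4 : (Real.sqrt (cfQ α ℓ))⁻¹ ≤ (v ^ ℓ / v)⁻¹ :=
      inv_anti₀ hvl h2
    calc (Real.sqrt (cfQ α ℓ))⁻¹ ≤ (v ^ ℓ / v)⁻¹ := h4
      _ = v * t ^ ℓ := by
          rw [inv_div, div_eq_mul_inv, htdef, inv_pow]
  -- summability
  have hsum : Summable (fun n : ℕ => ((n : ℝ) + 1) * t ^ n) := by
    have h2 := summable_pow_mul_geometric_of_norm_lt_one 1
      (r := t) (by rwa [Real.norm_eq_abs, abs_of_nonneg ht0.le])
    have h3 := summable_geometric_of_lt_one ht0.le ht1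
    simpa [pow_one, add_mul] using h2.add h3
  set T : ℝ := ∑' n : ℕ, ((n : ℝ) + 1) * t ^ n with hTdef
  have hT0 : 0 ≤ T := tsum_nonneg fun n => by positivity
  refine ⟨c ^ 2 * v * T + 1, by positivity, fun m => ?_⟩
  have hterm : ∀ ℓ ∈ Finset.range (m + 1),
      ((cfA α (ℓ + 1) : ℝ) / Real.sqrt (cfQ α ℓ)) *
          ∑ k ∈ Finset.Icc 1 (ℓ + 1), (cfA α k : ℝ)
        ≤ c ^ 2 * v * (((ℓ : ℝ) + 1) * t ^ ℓ) := by
    intro ℓ _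
    have ha1 : (1 : ℝ) ≤ (cfA α (ℓ + 1) : ℝ) := cfA_one_le α hα (ℓ + 1) (by omega)
    have hac : (cfA α (ℓ + 1) : ℝ) ≤ c := hbd (ℓ + 1) (by omega)
    have hsq : (0 : ℝ) < Real.sqrt (cfQ α ℓ) := Real.sqrt_pos.mpr (hqpos ℓ)
    have hfrac : (cfA α (ℓ + 1) : ℝ) / Real.sqrt (cfQ α ℓ) ≤ c * (v * t ^ ℓ) := by
      rw [div_eq_mul_inv]
      exact mul_le_mul hac (hsqrt_bound ℓ) (by positivity) hc.le
    have hinner : ∑ k ∈ Finset.Icc 1 (ℓ + 1), (cfA α k : ℝ) ≤ ((ℓ : ℝ) + 1) * c := by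
      have := Finset.sum_le_card_nsmul (Finset.Icc 1 (ℓ + 1))
        (fun k => (cfA α k : ℝ)) c
        (fun k hk => hbd k (Finset.mem_Icc.mp hk).1)
      rw [Nat.card_Icc] at this
      have hcard : (ℓ + 1 + 1 - 1) • c = ((ℓ : ℝ) + 1) * c := by
        rw [nsmul_eq_mul]; push_cast; ring
      rw [hcard] at this
      exact this
    have hinner0 : (0 : ℝ) ≤ ∑ k ∈ Finset.Icc 1 (ℓ + 1), (cfA α k : ℝ) :=
      Finset.sum_nonneg fun k hk =>
        le_trans zero_le_one (cfA_one_le α hα k (Finset.mem_Icc.mp hk).1)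
    calc ((cfA α (ℓ + 1) : ℝ) / Real.sqrt (cfQ α ℓ)) *
            ∑ k ∈ Finset.Icc 1 (ℓ + 1), (cfA α k : ℝ)
        ≤ (c * (v * t ^ ℓ)) * (((ℓ : ℝ) + 1) * c) :=
          mul_le_mul hfrac hinner hinner0 (by positivity)
      _ = c ^ 2 * v * (((ℓ : ℝ) + 1) * t ^ ℓ) := by ring
  have hsum_le : ∑ ℓ ∈ Finset.range (m + 1),
      ((cfA α (ℓ + 1) : ℝ) / Real.sqrt (cfQ α ℓ)) *
          ∑ k ∈ Finset.Icc 1 (ℓ + 1), (cfA α k : ℝ)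
        ≤ c ^ 2 * v * T := by
    calc _ ≤ ∑ ℓ ∈ Finset.range (m + 1), c ^ 2 * v * (((ℓ : ℝ) + 1) * t ^ ℓ) :=
          Finset.sum_le_sum hterm
      _ = c ^ 2 * v * ∑ ℓ ∈ Finset.range (m + 1), (((ℓ : ℝ) + 1) * t ^ ℓ) := by
          rw [Finset.mul_sum]
      _ ≤ c ^ 2 * v * T := by
          apply mul_le_mul_of_nonneg_left _ (by positivity)
          exact Summable.sum_le_tsum _ (fun i _ => by positivity) hsum
  linarith
end

section
/- Let α > 0 be irrational, let a < b be reals, and let h : ℝ → [0,∞) be continuous with h = 0 outside [a,b]. Let u = (1,α)/√(1+α²), v = (−α,1)/√(1+α²), and let ω = ∑_{g∈ℤ²} h(⟨g,v⟩)·δ_{⟨g,u⟩} be the associated weighted Dirac comb on ℝ. Then the density of ω exists and equals ∫_a^b h(t) dt; that is, ω([−T,T])/(2T) converges to ∫_a^b h(t) dt as T → ∞. -/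
open MeasureTheory Filter Complex Set

section Weyl

lemma circle_coe_pow (z : Circle) (n : ℕ) : ((z ^ n : Circle) : ℂ) = (z : ℂ) ^ n := rfl

lemma circle_coe_zpow (z : Circle) (m : ℤ) : ((z ^ m : Circle) : ℂ) = (z : ℂ) ^ m := by
  cases m with
  | ofNat n => simp [zpow_natCast, circle_coe_pow]
  | negSucc n => simp [zpow_negSucc, circle_coe_pow]

lemma icc_sum_zpow_norm_le (M : ℕ) (z : ℂ) (hz : ‖z‖ = 1) (h1 : z ≠ 1) :
    ‖∑ m ∈ Finset.Icc (-(M : ℤ)) (M : ℤ), z ^ m‖ ≤ 2 / ‖1 - z‖ := by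
  have hz0 : z ≠ 0 := by
    intro h; rw [h] at hz; simp at hz
  have hmap : Finset.Icc (-(M : ℤ)) (M : ℤ) =
      Finset.map ⟨fun i : ℕ => (i : ℤ) - M, fun i j hij => by simp only at hij; omega⟩
        (Finset.range (2 * M + 1)) := by
    ext x
    simp only [Finset.mem_Icc, Finset.mem_map, Finset.mem_range, Function.Embedding.coeFn_mk]
    constructor
    · rintro ⟨h1, h2⟩; exact ⟨(x + M).toNat, by omega, by show ((x + M).toNat : ℤ) - M = x; omega⟩
    · rintro ⟨i, hi, rfl⟩; show -(M:ℤ) ≤ (i:ℤ) - M ∧ (i:ℤ) - M ≤ M; omega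
  have hsum : ∑ m ∈ Finset.Icc (-(M : ℤ)) (M : ℤ), z ^ m
      = z ^ (-(M:ℤ)) * ∑ i ∈ Finset.range (2 * M + 1), z ^ i := by
    rw [hmap, Finset.sum_map, Finset.mul_sum]
    refine Finset.sum_congr rfl fun i _ => ?_
    show z ^ ((i:ℤ) - M) = z ^ (-(M:ℤ)) * z ^ i
    rw [sub_eq_add_neg, zpow_add₀ hz0, ← zpow_natCast z i]
    ring
  rw [hsum, geom_sum_eq h1, norm_mul, norm_zpow, hz, one_zpow, one_mul, norm_div,
    norm_sub_rev (1:ℂ)]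
  gcongr
  calc ‖z ^ (2 * M + 1) - 1‖ ≤ ‖z ^ (2 * M + 1)‖ + ‖(1:ℂ)‖ := norm_sub_le _ _
  _ ≤ 2 := by rw [norm_pow, hz]; norm_num

local notation "𝕋" => AddCircle (1:ℝ)

lemma toCircle_zsmul (y : 𝕋) (m : ℤ) :
    ((AddCircle.toCircle (m • y) : Circle) : ℂ) = ((AddCircle.toCircle y : Circle) : ℂ) ^ m := by
  let χ : 𝕋 →+ Additive Circle :=
    AddMonoidHom.mk' (fun x => Additive.ofMul (AddCircle.toCircle x))
      (fun x y => by simp [AddCircle.toCircle_add])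
  have h1 : χ (m • y) = m • χ y := map_zsmul χ m y
  have h2 : AddCircle.toCircle (m • y) = (AddCircle.toCircle y) ^ m := by
    simpa [χ, ← ofMul_zpow] using h1
  rw [h2, circle_coe_zpow]

theorem weyl_equidistribution (α : ℝ) (hα : Irrational α) (F : ℝ → ℝ)
    (hF : Continuous F) (hper : Function.Periodic F 1) :
    Tendsto (fun M : ℕ => (∑ m ∈ Finset.Icc (-(M : ℤ)) (M : ℤ), F (m * α)) / (2 * M + 1))
      atTop (nhds (∫ t in (0:ℝ)..1, F t)) := by
  haveI : Fact ((0:ℝ) < 1) := ⟨one_pos⟩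
  haveI : IsProbabilityMeasure (volume : Measure 𝕋) :=
    ⟨by rw [AddCircle.measure_univ]; simp⟩
  -- the lifted function
  have hGcont : Continuous hper.lift := by
    rw [(QuotientAddGroup.isQuotientMap_mk _).continuous_iff]
    have : hper.lift ∘ (QuotientAddGroup.mk : ℝ → 𝕋) = F := funext fun x => hper.lift_coe x
    rw [this]; exact hF
  set G : C(𝕋, ℝ) := ⟨hper.lift, hGcont⟩ with hG
  have hGcoe : ∀ x : ℝ, G ((x : ℝ) : 𝕋) = F x := fun x => hper.lift_coe x
  set ξ : 𝕋 := ((α : ℝ) : 𝕋) with hξ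
  set A : ℕ → C(𝕋, ℂ) → ℂ :=
    fun M f => (∑ m ∈ Finset.Icc (-(M : ℤ)) (M : ℤ), f (m • ξ)) / (2 * M + 1) with hA
  have hcard : ∀ M : ℕ, (Finset.Icc (-(M : ℤ)) (M : ℤ)).card = 2 * M + 1 := by
    intro M; rw [Int.card_Icc]; omega
  have hden : ∀ M : ℕ, ‖(2 * (M:ℂ) + 1)‖ = 2 * (M:ℝ) + 1 := by
    intro M
    have : (2 * (M:ℂ) + 1) = ((2 * (M:ℝ) + 1 : ℝ) : ℂ) := by push_cast; ring
    rw [this, Complex.norm_real, Real.norm_of_nonneg (by positivity)]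
  have hdenne : ∀ M : ℕ, (2 * (M:ℂ) + 1) ≠ 0 := by
    intro M h
    have := hden M
    rw [h] at this
    simp only [norm_zero] at this
    have : (0:ℝ) < 2 * (M:ℝ) + 1 := by positivity
    linarith
  have hAbound : ∀ (M : ℕ) (f : C(𝕋, ℂ)), ‖A M f‖ ≤ ‖f‖ := by
    intro M f
    rw [hA]
    simp only [norm_div, hden]
    rw [div_le_iff₀ (by positivity)]
    calc ‖∑ m ∈ Finset.Icc (-(M : ℤ)) (M : ℤ), f (m • ξ)‖
        ≤ ∑ m ∈ Finset.Icc (-(M : ℤ)) (M : ℤ), ‖f (m • ξ)‖ := norm_sum_le _ _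
      _ ≤ ∑ _m ∈ Finset.Icc (-(M : ℤ)) (M : ℤ), ‖f‖ :=
          Finset.sum_le_sum fun m _ => f.norm_coe_le_norm _
      _ = ‖f‖ * (2 * (M:ℝ) + 1) := by
          rw [Finset.sum_const, hcard, nsmul_eq_mul]; push_cast; ring
  have hInt : ∀ f : C(𝕋, ℂ), Integrable f := fun f =>
    f.continuous.integrable_of_hasCompactSupport (HasCompactSupport.of_compactSpace _)
  have hspan : ∀ f ∈ Submodule.span ℂ (Set.range (@fourier 1)),
      Tendsto (fun M => A M f) atTop (nhds (∫ x : 𝕋, f x)) := by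
    intro f hf
    induction hf using Submodule.span_induction with
    | mem f hf =>
        obtain ⟨n, rfl⟩ := hf
        rcases eq_or_ne n 0 with rfl | hn
        · have h1 : ∀ M, A M (fourier 0) = 1 := by
            intro M
            rw [hA]
            simp only [fourier_zero]
            rw [Finset.sum_const, hcard, nsmul_eq_mul, mul_one]
            have h2 : ((2 * M + 1 : ℕ) : ℂ) = 2 * (M:ℂ) + 1 := by push_cast; ring
            rw [h2, div_self (hdenne M)]
          have h2 : (∫ x : 𝕋, fourier 0 x) = 1 := by simp only [fourier_zero]; simp
          rw [h2]
          exact Tendsto.congr (fun M => (h1 M).symm) tendsto_const_nhds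
        · set z : ℂ := fourier n ξ with hz
          have hz1 : ‖z‖ = 1 := by
            rw [hz, fourier_apply]; exact Circle.norm_coe _
          have hzne : z ≠ 1 := by
            intro hcon
            rw [hz, fourier_apply] at hcon
            have h0 : AddCircle.toCircle ((n • ξ : 𝕋)) = AddCircle.toCircle (0 : 𝕋) :=
              Circle.coe_injective (by rw [hcon]; exact (fourier_zero' (T := 1)).symm)
            have h1 : (n • ξ : 𝕋) = 0 := AddCircle.injective_toCircle one_ne_zero h0
            rw [hξ, ← AddCircle.coe_zsmul] at h1
            rw [AddCircle.coe_eq_zero_iff] at h1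
            obtain ⟨k, hk⟩ := h1
            apply hα
            refine ⟨(k : ℚ) / (n : ℚ), ?_⟩
            have hn' : (n:ℝ) ≠ 0 := Int.cast_ne_zero.mpr hn
            push_cast
            rw [div_eq_iff hn']
            simp only [zsmul_eq_mul, mul_one] at hk
            rw [hk]; ring
          have hpow : ∀ m : ℤ, fourier n (m • ξ) = z ^ m := by
            intro m
            rw [fourier_apply, hz, fourier_apply, smul_comm n m, toCircle_zsmul]
          have hbound : ∀ M : ℕ, ‖A M (fourier n)‖ ≤ (2 / ‖1 - z‖) / (2 * M + 1) := by
            intro M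
            rw [hA]
            simp only [norm_div, hden, hpow]
            gcongr
            exact icc_sum_zpow_norm_le M z hz1 hzne
          have hint0 : (∫ x : 𝕋, fourier n x) = 0 := by
            have hc : (2 * (Real.pi:ℂ) * Complex.I * n) ≠ 0 := by
              simp only [ne_eq, mul_eq_zero]
              push_neg
              refine ⟨⟨⟨two_ne_zero, ?_⟩, Complex.I_ne_zero⟩, Int.cast_ne_zero.mpr hn⟩
              exact_mod_cast Real.pi_ne_zero
            rw [← AddCircle.intervalIntegral_preimage 1 0 (fun x : 𝕋 => fourier n x)]
            have h2 : Set.EqOn (fun x : ℝ => (fourier n ((x : ℝ) : 𝕋) : ℂ))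
                (fun x : ℝ => Complex.exp ((2 * (Real.pi:ℂ) * Complex.I * n) * x))
                (Set.uIcc 0 (0 + 1)) := by
              intro x _
              simp only [fourier_coe_apply]
              congr 1
              push_cast
              ring
            rw [intervalIntegral.integral_congr h2, integral_exp_mul_complex hc]
            have h1 : Complex.exp (2 * (Real.pi:ℂ) * Complex.I * n * (0 + 1 : ℝ)) = 1 := by
              have := Complex.exp_int_mul_two_pi_mul_I n
              rw [← this]; congr 1; push_cast; ring
            have h0 : Complex.exp (2 * (Real.pi:ℂ) * Complex.I * n * (0:ℝ)) = 1 := by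
              norm_num
            rw [h1, h0, sub_self, zero_div]
          rw [hint0]
          rw [tendsto_zero_iff_norm_tendsto_zero]
          refine squeeze_zero (fun M => norm_nonneg _) hbound ?_
          apply Tendsto.div_atTop tendsto_const_nhds
          apply tendsto_atTop_add_const_right
          exact Tendsto.const_mul_atTop two_pos (tendsto_natCast_atTop_atTop (R := ℝ))
    | zero =>
        simp only [hA, ContinuousMap.zero_apply, Finset.sum_const, smul_zero, integral_zero,
          zero_div]
        exact tendsto_const_nhds
    | add f g hf hg ihf ihg =>
        have heq : ∀ M, A M (f + g) = A M f + A M g := by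
          intro M
          rw [hA]
          simp only [ContinuousMap.add_apply, Finset.sum_add_distrib]
          rw [add_div]
        have hi : (∫ x : 𝕋, (f + g) x) = (∫ x : 𝕋, f x) + ∫ x : 𝕋, g x := by
          simp only [ContinuousMap.add_apply]
          exact integral_add (hInt f) (hInt g)
        rw [hi]
        exact Tendsto.congr (fun M => (heq M).symm) (ihf.add ihg)
    | smul c f hf ihf =>
        have heq : ∀ M, A M (c • f) = c * A M f := by
          intro M
          rw [hA]
          simp only [ContinuousMap.smul_apply, smul_eq_mul, ← Finset.mul_sum]
          rw [mul_div_assoc]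
        have hi : (∫ x : 𝕋, (c • f) x) = c * ∫ x : 𝕋, f x := by
          simp only [ContinuousMap.smul_apply]
          rw [integral_smul]
          simp
        rw [hi]
        exact Tendsto.congr (fun M => (heq M).symm) (ihf.const_mul c)
  -- density argument
  have hall : ∀ f : C(𝕋, ℂ), Tendsto (fun M => A M f) atTop (nhds (∫ x : 𝕋, f x)) := by
    intro f
    rw [Metric.tendsto_atTop]
    intro ε hε
    have hmem : f ∈ closure ((Submodule.span ℂ (Set.range (@fourier 1))) : Set C(𝕋, ℂ)) := by
      rw [← Submodule.topologicalClosure_coe, span_fourier_closure_eq_top]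
      trivial
    obtain ⟨P, hPmem, hPdist⟩ := Metric.mem_closure_iff.mp hmem (ε / 3) (by positivity)
    have hPspan := hspan P hPmem
    rw [Metric.tendsto_atTop] at hPspan
    obtain ⟨N, hN⟩ := hPspan (ε / 3) (by positivity)
    refine ⟨N, fun M hM => ?_⟩
    have h1 : dist (A M f) (A M P) ≤ ε / 3 := by
      have heq : A M f - A M P = A M (f - P) := by
        rw [hA]
        simp only [ContinuousMap.sub_apply, Finset.sum_sub_distrib]
        rw [sub_div]
      rw [dist_eq_norm, heq]
      calc ‖A M (f - P)‖ ≤ ‖f - P‖ := hAbound M _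
        _ = dist f P := (dist_eq_norm f P).symm
        _ ≤ ε / 3 := hPdist.le
    have h2 : dist (∫ x : 𝕋, P x) (∫ x : 𝕋, f x) ≤ ε / 3 := by
      rw [dist_eq_norm, ← integral_sub (hInt P) (hInt f)]
      calc ‖∫ x : 𝕋, (P x - f x)‖ ≤ ‖P - f‖ * (volume (univ : Set 𝕋)).toReal := by
            apply norm_integral_le_of_norm_le_const
            exact Eventually.of_forall fun x => by
              simpa using (P - f).norm_coe_le_norm x
        _ = ‖P - f‖ := by simp
        _ = dist P f := (dist_eq_norm P f).symm
        _ ≤ ε / 3 := by rw [dist_comm]; exact hPdist.le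
    have h3 := hN M hM
    calc dist (A M f) (∫ x : 𝕋, f x)
        ≤ dist (A M f) (A M P) + dist (A M P) (∫ x : 𝕋, P x)
          + dist (∫ x : 𝕋, P x) (∫ x : 𝕋, f x) := dist_triangle4 _ _ _ _
      _ < ε := by linarith
  -- complexification of G
  have hreal := hall ⟨fun x => (G x : ℂ), Complex.continuous_ofReal.comp G.continuous⟩
  have hint : (∫ x : 𝕋, ((G x : ℝ) : ℂ)) = ((∫ x : 𝕋, G x : ℝ) : ℂ) := integral_ofReal
  have hAval : ∀ M : ℕ, A M ⟨fun x => (G x : ℂ), Complex.continuous_ofReal.comp G.continuous⟩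
      = (((∑ m ∈ Finset.Icc (-(M : ℤ)) (M : ℤ), F (m * α)) / (2 * M + 1) : ℝ) : ℂ) := by
    intro M
    rw [hA]
    simp only [ContinuousMap.coe_mk]
    have hGm : ∀ m : ℤ, ((G (m • ξ) : ℝ) : ℂ) = ((F (m * α) : ℝ) : ℂ) := by
      intro m
      congr 1
      rw [hξ, ← AddCircle.coe_zsmul]
      have hmm : (m • α : ℝ) = m * α := by rw [zsmul_eq_mul]
      rw [hmm, hGcoe]
    rw [Finset.sum_congr rfl (fun m _ => hGm m)]
    push_cast
    ring
  have hIG : (∫ x : 𝕋, G x) = ∫ t in (0:ℝ)..1, F t := by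
    rw [← AddCircle.intervalIntegral_preimage 1 0 (fun x : 𝕋 => G x), zero_add]
    exact intervalIntegral.integral_congr fun x _ => hGcoe x
  rw [← hIG]
  have hcplx : Tendsto (fun M : ℕ =>
      (((∑ m ∈ Finset.Icc (-(M : ℤ)) (M : ℤ), F (m * α)) / (2 * M + 1) : ℝ) : ℂ)) atTop
      (nhds ((∫ x : 𝕋, G x : ℝ) : ℂ)) := by
    rw [← hint]
    exact hreal.congr hAval
  have hre := (Complex.continuous_re.tendsto _).comp hcplx
  simp only [Function.comp_def, Complex.ofReal_re] at hre
  exact hre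

end Weyl


open MeasureTheory Filter Set

section Periodization

variable {a b s : ℝ} {h : ℝ → ℝ}

noncomputable def Fper (h : ℝ → ℝ) (s : ℝ) : ℝ → ℝ := fun t => ∑' n : ℤ, h (((n : ℝ) - t) / s)

variable (hs : 0 < s) (hcont : Continuous h) (hnonneg : ∀ x, 0 ≤ h x)
  (hsupp : ∀ x : ℝ, x ∉ Set.Icc a b → h x = 0)

include hsupp in
lemma Fper_eq_sum (t : ℝ) (W : Finset ℤ)
    (hW : ∀ n : ℤ, ((n:ℝ) - t) / s ∈ Set.Icc a b → n ∈ W) :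
    Fper h s t = ∑ n ∈ W, h (((n : ℝ) - t) / s) := by
  apply tsum_eq_sum
  intro n hn
  exact hsupp _ fun hmem => hn (hW n hmem)

include hs in
lemma Fper_mem_window {t : ℝ} {n : ℤ} (hmem : ((n:ℝ) - t) / s ∈ Set.Icc a b) :
    t + s * a ≤ (n : ℝ) ∧ (n : ℝ) ≤ t + s * b := by
  obtain ⟨h1, h2⟩ := hmem
  rw [le_div_iff₀ hs] at h1
  rw [div_le_iff₀ hs] at h2
  constructor <;> nlinarith

include hs hsupp in
lemma Fper_hasSum (t : ℝ) :
    HasSum (fun n : ℤ => h (((n : ℝ) - t) / s)) (Fper h s t) := by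
  rw [Fper_eq_sum hsupp t (Finset.Icc ⌈t + s * a⌉ ⌊t + s * b⌋) (fun n hmem => by
    obtain ⟨h1, h2⟩ := Fper_mem_window hs hmem
    rw [Finset.mem_Icc]
    exact ⟨Int.ceil_le.mpr h1, Int.le_floor.mpr h2⟩)]
  apply hasSum_sum_of_ne_finset_zero
  intro n hn
  apply hsupp
  intro hmem
  obtain ⟨h1, h2⟩ := Fper_mem_window hs hmem
  exact hn (Finset.mem_Icc.mpr ⟨Int.ceil_le.mpr h1, Int.le_floor.mpr h2⟩)

include hnonneg in
lemma Fper_nonneg (t : ℝ) : 0 ≤ Fper h s t :=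
  tsum_nonneg fun n => hnonneg _

include hs hsupp in
lemma Fper_periodic : Function.Periodic (Fper h s) 1 := by
  intro t
  unfold Fper
  rw [← (Equiv.addRight (1:ℤ)).tsum_eq (fun n : ℤ => h (((n : ℝ) - (t + 1)) / s))]
  apply tsum_congr
  intro n
  congr 1
  simp only [Equiv.coe_addRight]
  push_cast
  ring

include hs hcont hsupp in
lemma Fper_continuous : Continuous (Fper h s) := by
  rw [continuous_iff_continuousAt]
  intro t₀
  set W : Finset ℤ := Finset.Icc ⌈t₀ - 1 + s * a⌉ ⌊t₀ + 1 + s * b⌋ with hWdef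
  have hev : Set.EqOn (Fper h s) (fun t => ∑ n ∈ W, h (((n : ℝ) - t) / s))
      (Metric.ball t₀ 1) := by
    intro t ht
    rw [Metric.mem_ball, Real.dist_eq, abs_lt] at ht
    apply Fper_eq_sum hsupp
    intro n hmem
    obtain ⟨h1, h2⟩ := Fper_mem_window hs hmem
    rw [hWdef, Finset.mem_Icc]
    constructor
    · apply Int.ceil_le.mpr; linarith
    · apply Int.le_floor.mpr; linarith
  have hcont2 : Continuous (fun t => ∑ n ∈ W, h (((n : ℝ) - t) / s)) := by
    apply continuous_finset_sum
    intro n _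
    exact hcont.comp ((continuous_const.sub continuous_id).div_const s)
  apply ContinuousAt.congr hcont2.continuousAt
  filter_upwards [Metric.ball_mem_nhds t₀ one_pos] with t ht
  exact (hev ht).symm

include hs hcont hsupp in
lemma Fper_integral (hab : a ≤ b) :
    ∫ t in (0:ℝ)..1, Fper h s t = s * ∫ t in a..b, h t := by
  set lo : ℤ := ⌈s * a⌉ - 1 with hlo
  set hi : ℤ := ⌊1 + s * b⌋ with hhi
  have hceil : ((⌈s * a⌉ : ℤ) : ℝ) < s * a + 1 := Int.ceil_lt_add_one _
  have hceil2 : s * a ≤ ((⌈s * a⌉ : ℤ) : ℝ) := Int.le_ceil _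
  have hfloor : ((⌊1 + s * b⌋ : ℤ) : ℝ) ≤ 1 + s * b := Int.floor_le _
  have hfloor2 : s * b ≤ ((⌊1 + s * b⌋ : ℤ) : ℝ) := by
    linarith [Int.sub_one_lt_floor (1 + s * b)]
  have hab' : s * a ≤ s * b := mul_le_mul_of_nonneg_left hab hs.le
  have hlolt : (lo : ℝ) < s * a := by rw [hlo]; push_cast; linarith
  have hhige : s * b ≤ (hi : ℝ) := by rw [hhi]; exact hfloor2
  have hlohi : lo ≤ hi := by
    have : (lo : ℝ) ≤ (hi : ℝ) := by linarith
    exact_mod_cast this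
  set W : Finset ℤ := Finset.Icc lo hi with hW
  -- On [0,1], Fper agrees with the finite sum over W
  have hstep1 : ∫ t in (0:ℝ)..1, Fper h s t
      = ∫ t in (0:ℝ)..1, ∑ n ∈ W, h (((n : ℝ) - t) / s) := by
    apply intervalIntegral.integral_congr
    intro t ht
    rw [Set.uIcc_of_le (by norm_num : (0:ℝ) ≤ 1)] at ht
    apply Fper_eq_sum hsupp
    intro n hmem
    obtain ⟨h1, h2⟩ := Fper_mem_window hs hmem
    rw [hW, Finset.mem_Icc]
    constructor
    · have : (lo : ℝ) < (n : ℝ) := by linarith [ht.1]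
      exact_mod_cast this.le
    · rw [hhi]
      exact Int.le_floor.mpr (by linarith [ht.2])
  have hstep2 : ∫ t in (0:ℝ)..1, ∑ n ∈ W, h (((n : ℝ) - t) / s)
      = ∑ n ∈ W, ∫ t in (0:ℝ)..1, h (((n : ℝ) - t) / s) := by
    apply intervalIntegral.integral_finset_sum
    intro n _
    exact ((hcont.comp ((continuous_const.sub continuous_id).div_const s))).intervalIntegrable _ _
  have hstep3 : ∀ n : ℤ, (∫ t in (0:ℝ)..1, h (((n : ℝ) - t) / s))
      = ∫ x in (((n:ℝ) - 1) / s)..((n:ℝ) / s), s * h x := by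
    intro n
    have e1 : (∫ t in (0:ℝ)..1, h (((n : ℝ) - t) / s))
        = ∫ u in ((n:ℝ) - 1)..(n:ℝ), h (u / s) := by
      have := intervalIntegral.integral_comp_sub_left (a := (0:ℝ)) (b := 1)
        (fun u => h (u / s)) (n : ℝ)
      simpa using this
    rw [e1, intervalIntegral.integral_comp_div (fun x => h x) hs.ne']
    rw [intervalIntegral.integral_const_mul]  -- maybe wrong; fix below
    rw [smul_eq_mul, ← intervalIntegral.integral_const_mul]
  have hcnt : (((hi - lo + 1).toNat : ℤ) : ℝ) = (hi : ℝ) - (lo : ℝ) + 1 := by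
    have h0 : ((hi - lo + 1).toNat : ℤ) = hi - lo + 1 := Int.toNat_of_nonneg (by omega)
    rw [h0]; push_cast; ring
  have hstep4 : ∑ n ∈ W, ∫ x in (((n:ℝ) - 1) / s)..((n:ℝ) / s), s * h x
      = ∫ x in (((lo:ℝ) - 1) / s)..((hi:ℝ) / s), s * h x := by
    have hmap : W = Finset.map ⟨fun i : ℕ => lo + (i : ℤ), fun i j hij => by
        simp only at hij; omega⟩ (Finset.range (hi - lo + 1).toNat) := by
      ext x
      simp only [hW, Finset.mem_Icc, Finset.mem_map, Finset.mem_range,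
        Function.Embedding.coeFn_mk]
      constructor
      · rintro ⟨h1, h2⟩; exact ⟨(x - lo).toNat, by omega, by show lo + ((x - lo).toNat : ℤ) = x; omega⟩
      · rintro ⟨i, hi2, rfl⟩; show lo ≤ lo + (i:ℤ) ∧ lo + (i:ℤ) ≤ hi; omega
    rw [hmap, Finset.sum_map]
    have key := intervalIntegral.sum_integral_adjacent_intervals (μ := volume)
      (f := fun x => s * h x) (a := fun k : ℕ => ((lo : ℝ) - 1 + k) / s)
      (n := (hi - lo + 1).toNat) (fun k _ => (continuous_const.mul hcont).intervalIntegrable _ _)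
    calc ∑ k ∈ Finset.range (hi - lo + 1).toNat,
          ∫ x in (((((⟨fun i : ℕ => lo + (i : ℤ), fun i j hij => by
              simp only at hij; omega⟩ : ℕ ↪ ℤ) k :ℤ):ℝ) - 1) / s)..((((⟨fun i : ℕ => lo + (i : ℤ),
              fun i j hij => by simp only at hij; omega⟩ : ℕ ↪ ℤ) k : ℤ):ℝ) / s), s * h x
        = ∑ k ∈ Finset.range (hi - lo + 1).toNat,
          ∫ x in (((lo:ℝ) - 1 + k) / s)..(((lo:ℝ) - 1 + (k+1:ℕ)) / s), s * h x := by
          apply Finset.sum_congr rfl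
          intro k _
          congr 1
          · show (((lo + (k:ℤ) : ℤ) : ℝ) - 1) / s = _; push_cast; ring
          · show ((lo + (k:ℤ) : ℤ) : ℝ) / s = _; push_cast; ring
      _ = ∫ x in (((lo:ℝ) - 1 + (0:ℕ)) / s)..(((lo:ℝ) - 1 + ((hi - lo + 1).toNat : ℕ)) / s),
            s * h x := key
      _ = ∫ x in (((lo:ℝ) - 1) / s)..((hi:ℝ) / s), s * h x := by
          congr 1
          · norm_num
          · have h0 : (((hi - lo + 1).toNat : ℕ) : ℝ) = (hi:ℝ) - lo + 1 := by
              exact_mod_cast hcnt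
            rw [h0]; ring
  have hint2 : ∀ (p q : ℝ), IntervalIntegrable (fun x => s * h x) volume p q :=
    fun p q => (continuous_const.mul hcont).intervalIntegrable _ _
  have hane : ∀ᵐ x : ℝ, x ≠ a := by
    have := MeasureTheory.measure_singleton (μ := (volume : Measure ℝ)) a
    rw [MeasureTheory.ae_iff]
    simpa [Set.setOf_eq_eq_singleton'] using this
  have hstep5 : ∫ x in (((lo:ℝ) - 1) / s)..((hi:ℝ) / s), s * h x
      = ∫ x in a..b, s * h x := by
    have hL : ((lo:ℝ) - 1) / s ≤ a := by
      rw [div_le_iff₀ hs]; nlinarith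
    have hU : b ≤ (hi:ℝ) / s := by
      rw [le_div_iff₀ hs]; nlinarith
    have z1 : (∫ x in (((lo:ℝ) - 1) / s)..a, s * h x) = 0 := by
      rw [← intervalIntegral.integral_zero (a := (((lo:ℝ) - 1) / s)) (b := a) (E := ℝ)]
      apply intervalIntegral.integral_congr_ae
      filter_upwards [hane] with x hx hxmem
      rw [Set.uIoc_of_le hL] at hxmem
      have hxa : x < a := lt_of_le_of_ne hxmem.2 hx
      rw [hsupp x (fun hc => absurd hc.1 (not_le.mpr hxa))]
      ring
    have z2 : (∫ x in b..((hi:ℝ) / s), s * h x) = 0 := by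
      rw [← intervalIntegral.integral_zero (a := b) (b := ((hi:ℝ) / s)) (E := ℝ)]
      apply intervalIntegral.integral_congr_ae
      apply Filter.Eventually.of_forall
      intro x hxmem
      rw [Set.uIoc_of_le hU] at hxmem
      rw [hsupp x (fun hc => absurd hc.2 (not_le.mpr hxmem.1))]
      ring
    have e1 := intervalIntegral.integral_add_adjacent_intervals (a := ((lo:ℝ) - 1) / s)
      (b := a) (c := (hi:ℝ) / s) (hint2 _ _) (hint2 _ _)
    have e2 := intervalIntegral.integral_add_adjacent_intervals (a := a)
      (b := b) (c := (hi:ℝ) / s) (hint2 _ _) (hint2 _ _)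
    rw [← e1, ← e2, z1, z2]
    ring
  rw [hstep1, hstep2]
  rw [Finset.sum_congr rfl (fun n _ => hstep3 n), hstep4, hstep5,
    intervalIntegral.integral_const_mul]

end Periodization


open MeasureTheory Filter Set

section Helpers

lemma lin_div_tendsto (s c d : ℝ) (hs : 0 < s) :
    Tendsto (fun T : ℝ => (2 * ((T + c) / s) + d) / (2 * T)) atTop (nhds (1 / s)) := by
  have h0 : Tendsto (fun T : ℝ => ((2 * c + d * s) / (2 * s)) / T) atTop (nhds 0) :=
    Tendsto.div_atTop tendsto_const_nhds tendsto_id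
  have h1 := (tendsto_const_nhds (x := (1/s : ℝ)) (f := (atTop : Filter ℝ))).add h0
  rw [add_zero] at h1
  apply h1.congr'
  filter_upwards [eventually_gt_atTop (0:ℝ)] with T hT
  field_simp
  ring

lemma ratio_helper (SS : ℕ → ℝ) (μ s : ℝ) (hs : 0 < s)
    (hSS : Tendsto (fun M : ℕ => SS M / (2 * M + 1)) atTop (nhds μ))
    (g : ℝ → ℕ) (hg : Tendsto g atTop atTop)
    (hg2 : Tendsto (fun T : ℝ => (2 * (g T : ℝ) + 1) / (2 * T)) atTop (nhds (1 / s))) :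
    Tendsto (fun T : ℝ => SS (g T) / (2 * T)) atTop (nhds (μ / s)) := by
  have h1 : Tendsto (fun T : ℝ => SS (g T) / (2 * (g T : ℝ) + 1)) atTop (nhds μ) := hSS.comp hg
  have h2 := h1.mul hg2
  have h3 : μ * (1 / s) = μ / s := by ring
  rw [h3] at h2
  apply h2.congr'
  filter_upwards [eventually_gt_atTop (0:ℝ)] with T hT
  have hden : (2 * (g T : ℝ) + 1) ≠ 0 := by positivity
  field_simp

lemma floor_ratio_tendsto (s K : ℝ) (hs : 0 < s) (hK : 0 ≤ K) :
    Tendsto (fun T : ℝ => (2 * ((⌊(T - K) / s⌋₊ : ℝ)) + 1) / (2 * T)) atTop (nhds (1 / s)) := by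
  have hlow := lin_div_tendsto s (-K) (-1) hs
  have hhigh := lin_div_tendsto s (-K) 1 hs
  apply tendsto_of_tendsto_of_tendsto_of_le_of_le' hlow hhigh
  · filter_upwards [eventually_ge_atTop K, eventually_gt_atTop (0:ℝ)] with T hT hT0
    have harg : 0 ≤ (T - K) / s := div_nonneg (by linarith) hs.le
    have h1 : (T - K) / s - 1 < (⌊(T - K) / s⌋₊ : ℝ) := Nat.sub_one_lt_floor _
    apply div_le_div_of_nonneg_right _ (by linarith : (0:ℝ) ≤ 2 * T)
    have : T + -K = T - K := by ring
    rw [this]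
    linarith
  · filter_upwards [eventually_ge_atTop K, eventually_gt_atTop (0:ℝ)] with T hT hT0
    have harg : 0 ≤ (T - K) / s := div_nonneg (by linarith) hs.le
    have h1 : (⌊(T - K) / s⌋₊ : ℝ) ≤ (T - K) / s := Nat.floor_le harg
    apply div_le_div_of_nonneg_right _ (by linarith : (0:ℝ) ≤ 2 * T)
    have : T + -K = T - K := by ring
    rw [this]
    linarith

lemma ceil_ratio_tendsto (s K : ℝ) (hs : 0 < s) (hK : 0 ≤ K) :
    Tendsto (fun T : ℝ => (2 * ((⌈(T + K) / s⌉₊ : ℝ)) + 1) / (2 * T)) atTop (nhds (1 / s)) := by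
  have hlow := lin_div_tendsto s K (-1) hs
  have hhigh := lin_div_tendsto s K 3 hs
  apply tendsto_of_tendsto_of_tendsto_of_le_of_le' hlow hhigh
  · filter_upwards [eventually_ge_atTop (0:ℝ), eventually_gt_atTop (0:ℝ)] with T hT hT0
    have harg : 0 ≤ (T + K) / s := div_nonneg (by linarith) hs.le
    have h1 : (T + K) / s ≤ (⌈(T + K) / s⌉₊ : ℝ) := Nat.le_ceil _
    apply div_le_div_of_nonneg_right _ (by linarith : (0:ℝ) ≤ 2 * T)
    linarith
  · filter_upwards [eventually_ge_atTop (0:ℝ), eventually_gt_atTop (0:ℝ)] with T hT hT0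
    have harg : 0 ≤ (T + K) / s := div_nonneg (by linarith) hs.le
    have h1 : (⌈(T + K) / s⌉₊ : ℝ) < (T + K) / s + 1 := Nat.ceil_lt_add_one harg
    apply div_le_div_of_nonneg_right _ (by linarith : (0:ℝ) ≤ 2 * T)
    linarith

end Helpers

/-- The density of the weighted `1×1` cut-and-project Dirac comb
`ω = ∑_{g ∈ ℤ²} h(⟨g,v⟩)·δ_{⟨g,u⟩}` with lattice `ℤ²`, window `[a,b]` and nonnegative
continuous weight function `h` exists and equals `∫_a^b h(t) dt`. -/
theorem weightedCPS_density (α : ℝ) (hα : Irrational α) (hαpos : 0 < α)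
    (a b : ℝ) (hab : a < b)
    (h : ℝ → ℝ) (hcont : Continuous h) (hnonneg : ∀ x : ℝ, 0 ≤ h x)
    (hsupp : ∀ x : ℝ, x ∉ Set.Icc a b → h x = 0)
    (u v : ℝ × ℝ)
    (hu : u = (1 / Real.sqrt (1 + α ^ 2), α / Real.sqrt (1 + α ^ 2)))
    (hv : v = (-α / Real.sqrt (1 + α ^ 2), 1 / Real.sqrt (1 + α ^ 2)))
    (ω : Measure ℝ)
    (hω : ω = Measure.sum (fun g : ℤ × ℤ =>
      ENNReal.ofReal (h ((g.1 : ℝ) * v.1 + (g.2 : ℝ) * v.2)) •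
        Measure.dirac ((g.1 : ℝ) * u.1 + (g.2 : ℝ) * u.2))) :
    Tendsto (fun T : ℝ => (ω (Set.Icc (-T) T)).toReal / (2 * T)) atTop
      (nhds (∫ t in a..b, h t)) := by
  set s : ℝ := Real.sqrt (1 + α ^ 2) with hsdef
  have hs : 0 < s := Real.sqrt_pos.mpr (by positivity)
  have hs2 : s ^ 2 = 1 + α ^ 2 := Real.sq_sqrt (by positivity)
  set C : ℝ := max |a| |b| with hCdef
  have hC0 : 0 ≤ C := le_trans (abs_nonneg a) (le_max_left _ _)
  set K : ℝ := α * C with hKdef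
  have hK0 : 0 ≤ K := mul_nonneg hαpos.le hC0
  set I : ℝ := ∫ t in a..b, h t with hIdef
  set F : ℝ → ℝ := Fper h s with hFdef
  set G : ℤ → ℝ := fun m => F ((m : ℝ) * α) with hGdef
  have hGnn : ∀ m, 0 ≤ G m := fun m => Fper_nonneg hnonneg _
  set SS : ℕ → ℝ := fun M => ∑ m ∈ Finset.Icc (-(M : ℤ)) (M : ℤ), G m with hSSdef
  have hSSnn : ∀ M, 0 ≤ SS M := fun M => Finset.sum_nonneg fun m _ => hGnn m
  -- Weyl equidistribution for the periodization
  have hweyl : Tendsto (fun M : ℕ => SS M / (2 * M + 1)) atTop (nhds (s * I)) := by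
    have hw := weyl_equidistribution α hα F (Fper_continuous hs hcont hsupp)
      (Fper_periodic hs hsupp)
    rw [Fper_integral hs hcont hsupp hab.le] at hw
    exact hw
  -- basic facts about terms
  have habs : ∀ t : ℝ, t ∈ Set.Icc a b → |t| ≤ C := by
    intro t ht
    rw [abs_le]
    constructor
    · calc -C ≤ -|a| := by simp [hCdef]
        _ ≤ a := neg_abs_le a
        _ ≤ t := ht.1
    · calc t ≤ b := ht.2
        _ ≤ |b| := le_abs_self b
        _ ≤ C := le_max_right _ _
  have hxg : ∀ m n : ℤ, ((m : ℝ) + (n : ℝ) * α) / s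
      = (m : ℝ) * s + (((n : ℝ) - (m : ℝ) * α) / s) * α := by
    intro m n
    rw [div_eq_iff hs.ne']
    linear_combination (-(m:ℝ)) * hs2 - α * (div_mul_cancel₀ ((n:ℝ) - (m:ℝ) * α) hs.ne')
  -- measure of the interval as a tsum
  have hmeas : ∀ T : ℝ, ω (Set.Icc (-T) T) = ∑' g : ℤ × ℤ,
      ENNReal.ofReal (h ((((g.2 : ℝ) - (g.1 : ℝ) * α)) / s)) *
        (Set.Icc (-T) T).indicator 1 ((((g.1 : ℝ) + (g.2 : ℝ) * α)) / s) := by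
    intro T
    rw [hω, Measure.sum_apply _ measurableSet_Icc]
    apply tsum_congr; intro g
    rw [Measure.smul_apply, smul_eq_mul, Measure.dirac_apply' _ measurableSet_Icc]
    have e1 : (g.1 : ℝ) * v.1 + (g.2 : ℝ) * v.2 = (((g.2 : ℝ) - (g.1 : ℝ) * α)) / s := by
      rw [hv]; dsimp only; field_simp; ring
    have e2 : (g.1 : ℝ) * u.1 + (g.2 : ℝ) * u.2 = (((g.1 : ℝ) + (g.2 : ℝ) * α)) / s := by
      rw [hu]; dsimp only; field_simp
    rw [e1, e2]
  -- the common computation of the cut-off sums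
  have hsumf : ∀ M : ℕ, (∑' g : ℤ × ℤ, (if g.1 ∈ Finset.Icc (-(M : ℤ)) (M : ℤ) then
      ENNReal.ofReal (h ((((g.2 : ℝ) - (g.1 : ℝ) * α)) / s)) else 0)) = ENNReal.ofReal (SS M) := by
    intro M
    have hfact : (∑' g : ℤ × ℤ, (if g.1 ∈ Finset.Icc (-(M : ℤ)) (M : ℤ) then
        ENNReal.ofReal (h ((((g.2 : ℝ) - (g.1 : ℝ) * α)) / s)) else 0))
        = ∑' m : ℤ, ∑' n : ℤ, (if m ∈ Finset.Icc (-(M : ℤ)) (M : ℤ) then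
        ENNReal.ofReal (h ((((n : ℝ) - (m : ℝ) * α)) / s)) else 0) :=
      ENNReal.tsum_prod (f := fun (m : ℤ) (n : ℤ) => if m ∈ Finset.Icc (-(M : ℤ)) (M : ℤ) then
        ENNReal.ofReal (h ((((n : ℝ) - (m : ℝ) * α)) / s)) else 0)
    rw [hfact]
    have hinner : ∀ m : ℤ, (∑' n : ℤ, (if m ∈ Finset.Icc (-(M : ℤ)) (M : ℤ) then
        ENNReal.ofReal (h ((((n : ℝ) - (m : ℝ) * α)) / s)) else 0))
        = if m ∈ Finset.Icc (-(M : ℤ)) (M : ℤ) then ENNReal.ofReal (G m) else 0 := by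
      intro m
      by_cases hm : m ∈ Finset.Icc (-(M : ℤ)) (M : ℤ)
      · simp only [hm, if_true]
        rw [← ENNReal.ofReal_tsum_of_nonneg (fun n => hnonneg _)
          (Fper_hasSum hs hsupp ((m : ℝ) * α)).summable]
        rfl
      · simp only [hm, if_false, tsum_zero]
    rw [tsum_congr hinner]
    rw [tsum_eq_sum (s := Finset.Icc (-(M : ℤ)) (M : ℤ))
      (fun m hm => by simp only [hm, if_false])]
    have hstep : ∑ m ∈ Finset.Icc (-(M : ℤ)) (M : ℤ),
        (if m ∈ Finset.Icc (-(M : ℤ)) (M : ℤ) then ENNReal.ofReal (G m) else 0)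
        = ∑ m ∈ Finset.Icc (-(M : ℤ)) (M : ℤ), ENNReal.ofReal (G m) :=
      Finset.sum_congr rfl (fun m hm => by rw [if_pos hm])
    rw [hstep, ← ENNReal.ofReal_sum_of_nonneg (fun m _ => hGnn m)]
  -- upper bound
  have hub : ∀ (T : ℝ) (M : ℕ), T + K ≤ (M : ℝ) * s →
      ω (Set.Icc (-T) T) ≤ ENNReal.ofReal (SS M) := by
    intro T M hTM
    rw [hmeas T, ← hsumf M]
    apply ENNReal.tsum_le_tsum
    rintro ⟨m, n⟩
    simp only
    by_cases hm : m ∈ Finset.Icc (-(M : ℤ)) (M : ℤ)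
    · simp only [hm, if_true]
      by_cases hx : (((m : ℝ) + (n : ℝ) * α)) / s ∈ Set.Icc (-T) T
      · rw [Set.indicator_of_mem hx]
        simp
      · rw [Set.indicator_of_notMem hx, mul_zero]
        exact zero_le
    · simp only [hm, if_false]
      by_cases hx : (((m : ℝ) + (n : ℝ) * α)) / s ∈ Set.Icc (-T) T
      · -- show the weight vanishes
        rw [Set.indicator_of_mem hx]
        have hh : h ((((n : ℝ) - (m : ℝ) * α)) / s) = 0 := by
          by_contra hh0
          have ht : (((n : ℝ) - (m : ℝ) * α)) / s ∈ Set.Icc a b := by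
            by_contra hmem
            exact hh0 (hsupp _ hmem)
          have htC := habs _ ht
          set t := (((n : ℝ) - (m : ℝ) * α)) / s
          have hxval := hxg m n
          have hxT : |((m : ℝ) + (n : ℝ) * α) / s| ≤ T := by
            rw [abs_le]
            exact ⟨hx.1, hx.2⟩
          have hms : |(m : ℝ)| * s ≤ T + K := by
            have e1 : (m : ℝ) * s = ((m : ℝ) + (n : ℝ) * α) / s - t * α := by
              rw [hxval]; ring
            calc |(m : ℝ)| * s = |(m : ℝ) * s| := by
                  rw [abs_mul, abs_of_pos hs]
              _ ≤ |((m : ℝ) + (n : ℝ) * α) / s| + |t * α| := by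
                  rw [e1]; exact abs_sub _ _
              _ ≤ T + K := by
                  rw [abs_mul, abs_of_pos hαpos]
                  have : |t| * α ≤ C * α := mul_le_mul_of_nonneg_right htC hαpos.le
                  rw [hKdef]
                  nlinarith
          have hmM : |(m : ℝ)| ≤ (M : ℝ) := by
            have := hms.trans hTM
            calc |(m : ℝ)| = |(m : ℝ)| * s / s := by field_simp
              _ ≤ (M : ℝ) * s / s := by gcongr
              _ = (M : ℝ) := by field_simp
          have : m ∈ Finset.Icc (-(M : ℤ)) (M : ℤ) := by
            rw [Finset.mem_Icc]
            rw [abs_le] at hmM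
            constructor
            · exact_mod_cast hmM.1
            · exact_mod_cast hmM.2
          exact hm this
        rw [hh]
        simp
      · rw [Set.indicator_of_notMem hx, mul_zero]
  -- lower bound
  have hlb : ∀ (T : ℝ) (M : ℕ), (M : ℝ) * s + K ≤ T →
      ENNReal.ofReal (SS M) ≤ ω (Set.Icc (-T) T) := by
    intro T M hTM
    rw [hmeas T, ← hsumf M]
    apply ENNReal.tsum_le_tsum
    rintro ⟨m, n⟩
    simp only
    by_cases hm : m ∈ Finset.Icc (-(M : ℤ)) (M : ℤ)
    · simp only [hm, if_true]
      by_cases hh0 : h ((((n : ℝ) - (m : ℝ) * α)) / s) = 0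
      · rw [hh0]
        simp
      · have ht : (((n : ℝ) - (m : ℝ) * α)) / s ∈ Set.Icc a b := by
          by_contra hmem
          exact hh0 (hsupp _ hmem)
        have htC := habs _ ht
        set t := (((n : ℝ) - (m : ℝ) * α)) / s
        have hxval := hxg m n
        have hmM : |(m : ℝ)| ≤ (M : ℝ) := by
          rw [Finset.mem_Icc] at hm
          rw [abs_le]
          constructor
          · exact_mod_cast hm.1
          · exact_mod_cast hm.2
        have hxT : |((m : ℝ) + (n : ℝ) * α) / s| ≤ T := by
          calc |((m : ℝ) + (n : ℝ) * α) / s| = |(m : ℝ) * s + t * α| := by rw [hxval]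
            _ ≤ |(m : ℝ) * s| + |t * α| := abs_add_le _ _
            _ ≤ (M : ℝ) * s + K := by
                rw [abs_mul, abs_mul, abs_of_pos hs, abs_of_pos hαpos, hKdef]
                have h1 : |(m : ℝ)| * s ≤ (M : ℝ) * s := by gcongr
                have h2 : |t| * α ≤ C * α := mul_le_mul_of_nonneg_right htC hαpos.le
                nlinarith
            _ ≤ T := hTM
        have hx : (((m : ℝ) + (n : ℝ) * α)) / s ∈ Set.Icc (-T) T := by
          rw [abs_le] at hxT
          exact ⟨hxT.1, hxT.2⟩
        rw [Set.indicator_of_mem hx]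
        simp
    · simp only [hm, if_false]
      exact zero_le
  -- translate to real bounds
  have hsand : ∀ (T : ℝ) (Mlo Mhi : ℕ), (Mlo : ℝ) * s + K ≤ T → T + K ≤ (Mhi : ℝ) * s →
      SS Mlo ≤ (ω (Set.Icc (-T) T)).toReal ∧ (ω (Set.Icc (-T) T)).toReal ≤ SS Mhi := by
    intro T Mlo Mhi h1 h2
    have hne : ω (Set.Icc (-T) T) ≠ ⊤ :=
      ne_top_of_le_ne_top ENNReal.ofReal_ne_top (hub T Mhi h2)
    constructor
    · have := ENNReal.toReal_mono hne (hlb T Mlo h1)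
      rwa [ENNReal.toReal_ofReal (hSSnn Mlo)] at this
    · have := ENNReal.toReal_mono ENNReal.ofReal_ne_top (hub T Mhi h2)
      rwa [ENNReal.toReal_ofReal (hSSnn Mhi)] at this
  -- lower and upper comparison functions
  set glo : ℝ → ℕ := fun T => ⌊(T - K) / s⌋₊ with hglo
  set ghi : ℝ → ℕ := fun T => ⌈(T + K) / s⌉₊ with hghi
  have hglotop : Tendsto glo atTop atTop := by
    apply tendsto_nat_floor_atTop.comp
    apply Tendsto.atTop_div_const hs
    exact tendsto_atTop_add_const_right _ _ tendsto_id
  have hghitop : Tendsto ghi atTop atTop := by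
    apply tendsto_nat_ceil_atTop.comp
    apply Tendsto.atTop_div_const hs
    exact tendsto_atTop_add_const_right _ _ tendsto_id
  have hL : Tendsto (fun T : ℝ => SS (glo T) / (2 * T)) atTop (nhds I) := by
    have := ratio_helper SS (s * I) s hs hweyl glo hglotop (by
      have := floor_ratio_tendsto s K hs hK0
      exact this)
    have h3 : s * I / s = I := by
      field_simp
    rw [h3] at this
    exact this
  have hU : Tendsto (fun T : ℝ => SS (ghi T) / (2 * T)) atTop (nhds I) := by
    have := ratio_helper SS (s * I) s hs hweyl ghi hghitop (by
      have := ceil_ratio_tendsto s K hs hK0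
      exact this)
    have h3 : s * I / s = I := by
      field_simp
    rw [h3] at this
    exact this
  apply tendsto_of_tendsto_of_tendsto_of_le_of_le' hL hU
  · filter_upwards [eventually_ge_atTop (K + s), eventually_gt_atTop (0:ℝ)] with T hT hT0
    have hcond1 : (glo T : ℝ) * s + K ≤ T := by
      have harg : 0 ≤ (T - K) / s := by
        apply div_nonneg _ hs.le
        linarith [hs.le]
      have := Nat.floor_le harg
      rw [hglo]
      calc (⌊(T - K) / s⌋₊ : ℝ) * s + K ≤ ((T - K) / s) * s + K := by gcongr
        _ = T := by field_simp; ring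
    have hcond2 : T + K ≤ (ghi T : ℝ) * s := by
      have := Nat.le_ceil ((T + K) / s)
      rw [hghi]
      calc T + K = ((T + K) / s) * s := by field_simp
        _ ≤ (⌈(T + K) / s⌉₊ : ℝ) * s := by gcongr
    have := (hsand T (glo T) (ghi T) hcond1 hcond2).1
    gcongr
  · filter_upwards [eventually_ge_atTop (K + s), eventually_gt_atTop (0:ℝ)] with T hT hT0
    have hcond1 : (glo T : ℝ) * s + K ≤ T := by
      have harg : 0 ≤ (T - K) / s := by
        apply div_nonneg _ hs.le
        linarith [hs.le]
      have := Nat.floor_le harg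
      rw [hglo]
      calc (⌊(T - K) / s⌋₊ : ℝ) * s + K ≤ ((T - K) / s) * s + K := by gcongr
        _ = T := by field_simp; ring
    have hcond2 : T + K ≤ (ghi T : ℝ) * s := by
      have := Nat.le_ceil ((T + K) / s)
      rw [hghi]
      calc T + K = ((T + K) / s) * s := by field_simp
        _ ≤ (⌈(T + K) / s⌉₊ : ℝ) * s := by gcongr
    have := (hsand T (glo T) (ghi T) hcond1 hcond2).2
    gcongr
end

section
/- Let τ = (1+√5)/2 and let Λ = {m + nτ : m, n ∈ ℤ, −1/τ ≤ m − n/τ < 1} be the Fibonacci cut-and-project set. Then Λ is bounded distance equivalent to some lattice in ℝ: there exist a > 0 and a bijection φ : Λ → aℤ such that |x − φ(x)| is uniformly bounded over x ∈ Λ. -/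
/-- The Fibonacci cut-and-project set
`Λ = {m + nτ : m, n ∈ ℤ, −1/τ ≤ m − n/τ < 1}`, `τ = (1+√5)/2`, is bounded distance
equivalent to some lattice `aℤ` in `ℝ`. -/
theorem fibonacci_bddDist_lattice (τ : ℝ) (hτ : τ = (1 + Real.sqrt 5) / 2)
    (Λ : Set ℝ)
    (hΛ : Λ = {x : ℝ | ∃ m n : ℤ, x = (m : ℝ) + (n : ℝ) * τ ∧
      -1 / τ ≤ (m : ℝ) - (n : ℝ) / τ ∧ (m : ℝ) - (n : ℝ) / τ < 1}) :
    ∃ a : ℝ, 0 < a ∧ ∃ φ : ℝ → ℝ,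
      Set.BijOn φ Λ {y : ℝ | ∃ k : ℤ, y = a * (k : ℝ)} ∧
      ∃ C : ℝ, ∀ x ∈ Λ, |x - φ x| ≤ C := by
  have hs5 : (Real.sqrt 5) ^ 2 = 5 := Real.sq_sqrt (by norm_num)
  set s := Real.sqrt 5 with hsdef
  have hsnn : 0 ≤ s := Real.sqrt_nonneg 5
  have hs2 : 2 < s := by nlinarith
  have hs3 : s < 3 := by nlinarith
  have hτpos : 0 < τ := by rw [hτ]; linarith
  have hτne : τ ≠ 0 := ne_of_gt hτpos
  have hinv : (1:ℝ) / τ = (s - 1) / 2 := by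
    rw [hτ, div_eq_div_iff (by linarith) (by norm_num)]
    nlinarith
  have hdiv : ∀ z : ℝ, z / τ = z * ((s - 1) / 2) := by
    intro z
    rw [div_eq_mul_one_div, hinv]
  set a : ℝ := (5 - s) / 2 with ha
  have hapos : 0 < a := by rw [ha]; linarith
  have hane : a ≠ 0 := ne_of_gt hapos
  -- key : for points of Λ, round(x/a) = m + n
  have key : ∀ m n : ℤ, -1 / τ ≤ (m : ℝ) - (n : ℝ) / τ → (m : ℝ) - (n : ℝ) / τ < 1 →
      round (((m : ℝ) + (n : ℝ) * τ) / a) = m + n := by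
    intro m n h1 h2
    simp only [hdiv] at h1 h2
    have hns : (n : ℝ) * s ^ 2 = (n : ℝ) * 5 := by rw [hs5]
    have hlo : -(1/2 : ℝ) < ((m : ℝ) + (n : ℝ) * τ) / a - ((m + n : ℤ) : ℝ) := by
      rw [lt_sub_iff_add_lt, lt_div_iff₀ hapos, hτ, ha]
      push_cast
      nlinarith [hns, mul_lt_mul_of_pos_left h2 (show (0:ℝ) < (3 - s) / 2 by linarith)]
    have hhi : ((m : ℝ) + (n : ℝ) * τ) / a - ((m + n : ℤ) : ℝ) < 1/2 := by
      rw [sub_lt_iff_lt_add, div_lt_iff₀ hapos, hτ, ha]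
      push_cast
      nlinarith [hns, mul_le_mul_of_nonneg_left h1 (show (0:ℝ) ≤ (3 - s) / 2 by linarith)]
    have hsplit : ((m : ℝ) + (n : ℝ) * τ) / a =
        (((m : ℝ) + (n : ℝ) * τ) / a - ((m + n : ℤ) : ℝ)) + ((m + n : ℤ) : ℝ) := by ring
    rw [hsplit, round_add_intCast,
      round_eq_zero_iff.mpr ⟨by linarith, by linarith⟩, zero_add]
  refine ⟨a, hapos, fun x => a * (round (x / a) : ℤ), ⟨?_, ?_, ?_⟩, a / 2, ?_⟩
  · intro x _
    exact ⟨round (x / a), rfl⟩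
  · -- InjOn
    intro x hx x' hx' hfe
    rw [hΛ] at hx hx'
    obtain ⟨m, n, rfl, h1, h2⟩ := hx
    obtain ⟨m', n', rfl, h1', h2'⟩ := hx'
    simp only [key m n h1 h2, key m' n' h1' h2'] at hfe
    have hk : ((m + n : ℤ) : ℝ) = ((m' + n' : ℤ) : ℝ) := mul_left_cancel₀ hane hfe
    have hk' : m + n = m' + n' := by exact_mod_cast hk
    simp only [hdiv] at h1 h2 h1' h2'
    have hmm : (m : ℝ) + n = (m' : ℝ) + n' := by exact_mod_cast hk
    have hd : |((n - n' : ℤ) : ℝ)| < 1 := by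
      push_cast
      rw [abs_lt]
      constructor
      · nlinarith [hs2, mul_pos (show (0:ℝ) < s + 1 by linarith) (show (0:ℝ) < 1 by norm_num)]
      · nlinarith [hs2]
    have hnn : n = n' := by
      by_contra h
      have h1le : (1 : ℤ) ≤ |n - n'| := Int.one_le_abs (sub_ne_zero.mpr h)
      have : (1 : ℝ) ≤ |((n - n' : ℤ) : ℝ)| := by
        rw [← Int.cast_abs]; exact_mod_cast h1le
      linarith
    have hmeq : m = m' := by omega
    rw [hnn, hmeq]
  · -- SurjOn
    intro yy hy
    obtain ⟨k, rfl⟩ := hy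
    set n : ℤ := ⌊((k : ℝ) - 1) / τ⌋ + 1 with hn
    have hfl1 : ((k : ℝ) - 1) / τ < (n : ℝ) := by
      have := Int.lt_floor_add_one (((k : ℝ) - 1) / τ)
      push_cast [hn]
      linarith
    have hfl2 : (n : ℝ) ≤ ((k : ℝ) - 1) / τ + 1 := by
      have := Int.floor_le (((k : ℝ) - 1) / τ)
      push_cast [hn]
      linarith
    simp only [hdiv] at hfl1 hfl2
    have hks : ((k : ℝ) - 1) * s ^ 2 = ((k : ℝ) - 1) * 5 := by rw [hs5]
    have hw1 : -1 / τ ≤ ((k - n : ℤ) : ℝ) - (n : ℝ) / τ := by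
      simp only [hdiv]
      push_cast
      nlinarith [hks, mul_le_mul_of_nonneg_right hfl2 (show (0:ℝ) ≤ (s + 1) / 2 by linarith)]
    have hw2 : ((k - n : ℤ) : ℝ) - (n : ℝ) / τ < 1 := by
      simp only [hdiv]
      push_cast
      nlinarith [hks, mul_lt_mul_of_pos_right hfl1 (show (0:ℝ) < (s + 1) / 2 by linarith)]
    refine ⟨((k - n : ℤ) : ℝ) + (n : ℝ) * τ, ?_, ?_⟩
    · rw [hΛ]
      exact ⟨k - n, n, rfl, hw1, hw2⟩
    · show a * (round ((((k - n : ℤ) : ℝ) + (n : ℝ) * τ) / a) : ℤ) = a * (k : ℝ)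
      rw [key (k - n) n hw1 hw2]
      norm_num
  · -- bound
    intro x _
    have h1 : |x / a - (round (x / a) : ℤ)| ≤ 1 / 2 := abs_sub_round _
    have h2 : x - a * (round (x / a) : ℤ) = a * (x / a - (round (x / a) : ℤ)) := by
      field_simp
    rw [h2, abs_mul, abs_of_pos hapos]
    calc a * |x / a - (round (x / a) : ℤ)| ≤ a * (1 / 2) := by
          exact mul_le_mul_of_nonneg_left h1 (le_of_lt hapos)
      _ = a / 2 := by ring
end
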